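/- arXiv:2303.18249 — 4 statements merged into one kernel-verified Lean document; each statement's English description precedes it below -/
import Mathlib

section
/- Let H be an abelian category which is a length category and let S be a simple object of H. Then the full subcategory ⟨S⟩ is functorially finite in H, i.e. every object of H admits both a left ⟨S⟩-approximation and a right ⟨S⟩-approximation. -/
/-!
STATEMENT 1: Let H be an abelian category which is a length category and let S be a simple
object of H. Then the full subcategory ⟨S⟩ is functorially finite in H, i.e. every object of H
admits both a left ⟨S⟩-approximation and a right ⟨S⟩-approximation.
-/

open CategoryTheory CategoryTheory.Limits ZeroObject

universe v u

variable {C : Type u} [Category.{v} C] [Abelian C]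

/-- `⟨S⟩`: the smallest full subcategory of the abelian category `C` containing the zero
objects and `S`, and closed under extensions; equivalently, the objects admitting a finite
filtration with all subquotients isomorphic to `S`. -/
inductive SClosure (S : C) : C → Prop
  | of_isZero (X : C) : IsZero X → SClosure S X
  | of_iso (X : C) : Nonempty (X ≅ S) → SClosure S X
  | of_extension {X Y Z : C} (f : X ⟶ Y) (g : Y ⟶ Z) (w : f ≫ g = 0)
      (hse : (ShortComplex.mk f g w).ShortExact) :
      SClosure S X → SClosure S Z → SClosure S Y

/-- An object has finite length: it admits a finite filtration with simple subquotients. -/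
inductive FinLength : C → Prop
  | of_isZero (X : C) : IsZero X → FinLength X
  | of_extension {X Y Z : C} (f : X ⟶ Y) (g : Y ⟶ Z) (w : f ≫ g = 0)
      (hse : (ShortComplex.mk f g w).ShortExact) :
      FinLength X → Simple Z → FinLength Y

lemma isZero_of_epi_of_isZero {X Q : C} (hz : IsZero X) (π : X ⟶ Q) (hπ : Epi π) : IsZero Q := by
  rw [IsZero.iff_id_eq_zero]
  haveI := hπ
  apply (cancel_epi π).1
  rw [hz.eq_of_src π 0]
  simp

lemma SClosure.of_iso' {S X Y : C} (h : SClosure S X) (e : X ≅ Y) : SClosure S Y := by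
  have w : e.hom ≫ (0 : Y ⟶ (0 : C)) = 0 := comp_zero
  have hse := (ShortComplex.Splitting.ofIsIsoOfIsZero (ShortComplex.mk e.hom (0 : Y ⟶ (0 : C)) w)
    inferInstance (isZero_zero C)).shortExact
  exact SClosure.of_extension e.hom 0 w hse h (SClosure.of_isZero _ (isZero_zero C))

lemma FinLength.of_iso' {X Y : C} (h : FinLength X) (e : X ≅ Y) : FinLength Y := by
  induction h generalizing Y with
  | of_isZero X hz => exact FinLength.of_isZero _ (hz.of_iso e.symm)
  | of_extension f g w hse hX hZ IH =>
    have w' : (f ≫ e.hom) ≫ (e.inv ≫ g) = 0 := by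
      simp only [Category.assoc, Iso.hom_inv_id_assoc, w]
    have hse' : (ShortComplex.mk (f ≫ e.hom) (e.inv ≫ g) w').ShortExact := by
      refine ShortComplex.shortExact_of_iso ?_ hse
      exact ShortComplex.isoMk (Iso.refl _) e (Iso.refl _) (by simp) (by simp)
    exact FinLength.of_extension _ _ w' hse' hX hZ

lemma finLength_of_simple {Z : C} (hZ : Simple Z) : FinLength Z := by
  have w : (0 : (0 : C) ⟶ Z) ≫ 𝟙 Z = 0 := zero_comp
  have hse := (ShortComplex.Splitting.ofIsZeroOfIsIso (ShortComplex.mk (0 : (0 : C) ⟶ Z) (𝟙 Z) w)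
    (isZero_zero C) inferInstance).shortExact
  exact FinLength.of_extension _ _ w hse (FinLength.of_isZero _ (isZero_zero C)) hZ

lemma SClosure.quot {S X : C} [Simple S] (h : SClosure S X) :
    ∀ {Q : C} (π : X ⟶ Q), Epi π → SClosure S Q := by
  induction h with
  | of_isZero X hz =>
    intro Q π hπ
    exact SClosure.of_isZero _ (isZero_of_epi_of_isZero hz π hπ)
  | of_iso X he =>
    intro Q π hπ
    obtain ⟨e⟩ := he
    haveI := hπ
    by_cases hzero : π = 0
    · refine SClosure.of_isZero _ ?_
      rw [IsZero.iff_id_eq_zero]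
      apply (cancel_epi π).1
      rw [hzero]; simp
    · haveI : Simple X := Simple.of_iso e
      haveI := isIso_of_epi_of_nonzero hzero
      exact SClosure.of_iso _ ⟨(asIso π).symm ≪≫ e⟩
  | of_extension f g w hse hX hZ IHX IHZ =>
    intro Q π hπ
    set q₁ := f ≫ π with hq₁
    have h1 : q₁ ≫ cokernel.π (Abelian.image.ι q₁) = 0 := by
      calc q₁ ≫ cokernel.π (Abelian.image.ι q₁)
          = Abelian.factorThruImage q₁ ≫ Abelian.image.ι q₁ ≫ cokernel.π (Abelian.image.ι q₁) := by
            rw [← Category.assoc, Abelian.image.fac]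
        _ = 0 := by rw [cokernel.condition, comp_zero]
    have hI : SClosure S (Abelian.image q₁) := IHX (Abelian.factorThruImage q₁) inferInstance
    have hfc : f ≫ (π ≫ cokernel.π (Abelian.image.ι q₁)) = 0 := by
      rw [← Category.assoc]; exact h1
    obtain ⟨r, hr⟩ := CokernelCofork.IsColimit.desc' hse.gIsCokernel
      (π ≫ cokernel.π (Abelian.image.ι q₁)) hfc
    haveI := hπ
    haveI : Epi (π ≫ cokernel.π (Abelian.image.ι q₁)) := epi_comp _ _
    have hre : Epi r := epi_of_epi_fac hr
    have hC : SClosure S (cokernel (Abelian.image.ι q₁)) := IHZ r hre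
    have hseq : (ShortComplex.mk (Abelian.image.ι q₁) (cokernel.π (Abelian.image.ι q₁))
        (cokernel.condition _)).ShortExact :=
      { exact := ShortComplex.exact_of_g_is_cokernel _ (cokernelIsCokernel _)
        mono_f := inferInstance
        epi_g := inferInstance }
    exact SClosure.of_extension _ _ _ hseq hI hC

lemma simple_op {X : C} [Simple X] : Simple (Opposite.op X) := by
  constructor
  intro Y f hf
  haveI := hf
  constructor
  · intro hiso hzero
    haveI := hiso
    apply id_nonzero X
    have h2 : (𝟙 (Opposite.op X)) = (0 : Opposite.op X ⟶ Opposite.op X) := by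
      calc 𝟙 (Opposite.op X) = inv f ≫ f := (IsIso.inv_hom_id f).symm
        _ = inv f ≫ 0 := congrArg (fun g => inv f ≫ g) hzero
        _ = 0 := comp_zero
    have h3 := congrArg Quiver.Hom.unop h2
    simpa using h3
  · intro hne
    have hu : f.unop ≠ 0 := by
      intro h0
      apply hne
      apply Quiver.Hom.unop_inj
      simpa using h0
    haveI : IsIso f.unop := isIso_of_epi_of_nonzero hu
    exact (isIso_unop_iff f).1 inferInstance

lemma SClosure.op {S X : C} (h : SClosure S X) :
    SClosure (Opposite.op S) (Opposite.op X) := by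
  induction h with
  | of_isZero X hz => exact SClosure.of_isZero _ hz.op
  | of_iso X he => exact SClosure.of_iso _ ⟨he.some.op.symm⟩
  | of_extension f g w hse hX hZ IHX IHZ =>
    exact SClosure.of_extension _ _ _ hse.op IHZ IHX

lemma SClosure.unop {S X : Cᵒᵖ} (h : SClosure S X) :
    SClosure S.unop X.unop := by
  induction h with
  | of_isZero X hz => exact SClosure.of_isZero _ hz.unop
  | of_iso X he => exact SClosure.of_iso _ ⟨he.some.unop.symm⟩
  | of_extension f g w hse hX hZ IHX IHZ =>
    exact SClosure.of_extension _ _ _ hse.unop IHZ IHX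

lemma SClosure.sub {S X Y : C} [Simple S] (h : SClosure S X) (ι : Y ⟶ X) (hι : Mono ι) :
    SClosure S Y := by
  haveI := hι
  haveI : Simple (Opposite.op S) := simple_op
  have h1 : SClosure (Opposite.op S) (Opposite.op Y) := (SClosure.op h).quot ι.op inferInstance
  exact h1.unop

lemma SClosure.biprod {S X Y : C} (hX : SClosure S X) (hY : SClosure S Y) :
    SClosure S (X ⊞ Y) :=
  SClosure.of_extension _ _ _ (ShortComplex.Splitting.ofHasBinaryBiproduct X Y).shortExact hX hY

open scoped Pseudoelement

open CategoryTheory.Abelian.Pseudoelement in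
lemma restrictExt {A E B X_B Z₀ : C} (f : A ⟶ E) (g : E ⟶ B) (w : f ≫ g = 0)
    (hse : (ShortComplex.mk f g w).ShortExact)
    (s : X_B ⟶ B) (z : B ⟶ Z₀) (wz : s ≫ z = 0)
    (hse₂ : (ShortComplex.mk s z wz).ShortExact) :
    ∃ (E' : C) (f' : A ⟶ E') (ρ : E' ⟶ X_B) (ι : E' ⟶ E) (w' : f' ≫ ρ = 0)
      (w'' : ι ≫ (g ≫ z) = 0),
      (ShortComplex.mk f' ρ w').ShortExact ∧ (ShortComplex.mk ι (g ≫ z) w'').ShortExact := by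
  haveI : Epi g := hse.epi_g
  haveI : Epi z := hse₂.epi_g
  haveI : Mono f := hse.mono_f
  haveI : Mono s := hse₂.mono_f
  haveI : Epi (g ≫ z) := epi_comp _ _
  set ι := kernel.ι (g ≫ z) with hι
  have w'' : ι ≫ (g ≫ z) = 0 := kernel.condition _
  have hse'' : (ShortComplex.mk ι (g ≫ z) w'').ShortExact :=
    { exact := ShortComplex.exact_of_f_is_kernel _ (kernelIsKernel _)
      mono_f := inferInstance
      epi_g := inferInstance }
  have hfgz : f ≫ (g ≫ z) = 0 := by rw [← Category.assoc, w, zero_comp]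
  set f' : A ⟶ kernel (g ≫ z) := kernel.lift (g ≫ z) f hfgz with hf'
  have hf'ι : f' ≫ ι = f := kernel.lift_ι _ _ _
  haveI : Mono f' := by
    have : Mono (f' ≫ ι) := by rw [hf'ι]; infer_instance
    exact mono_of_mono f' ι
  have hιgz : (ι ≫ g) ≫ z = 0 := by rw [Category.assoc]; exact w''
  obtain ⟨ρ₀, hρ₀⟩ := KernelFork.IsLimit.lift' hse₂.fIsKernel (ι ≫ g) hιgz
  let ρ : kernel (g ≫ z) ⟶ X_B := ρ₀
  have hρ : ρ ≫ s = ι ≫ g := hρ₀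
  have w' : f' ≫ ρ = 0 := by
    rw [← cancel_mono s, Category.assoc, hρ, zero_comp, ← Category.assoc, hf'ι, w]
  -- Epi ρ via pseudoelements
  have hepiρ : Epi ρ := by
    apply epi_of_pseudo_surjective
    intro x
    obtain ⟨e, he⟩ := pseudo_surjective_of_epi g (s x)
    have hz0 : (g ≫ z) e = 0 := by
      rw [Abelian.Pseudoelement.comp_apply, he, ← Abelian.Pseudoelement.comp_apply, wz, Abelian.Pseudoelement.zero_apply]
    obtain ⟨e', he'⟩ := pseudo_exact_of_exact hse''.exact e hz0
    refine ⟨e', ?_⟩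
    apply pseudo_injective_of_mono s
    rw [← Abelian.Pseudoelement.comp_apply, hρ, Abelian.Pseudoelement.comp_apply, he', he]
  have hexact : (ShortComplex.mk f' ρ w').Exact := by
    apply exact_of_pseudo_exact
    intro b hb
    have hgι : g (ι b) = 0 := by
      rw [← Abelian.Pseudoelement.comp_apply, ← hρ, Abelian.Pseudoelement.comp_apply, hb, Abelian.Pseudoelement.apply_zero]
    obtain ⟨a, ha⟩ := pseudo_exact_of_exact hse.exact (ι b) hgι
    refine ⟨a, ?_⟩
    apply pseudo_injective_of_mono ι
    rw [← Abelian.Pseudoelement.comp_apply, hf'ι, ha]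
  exact ⟨kernel (g ≫ z), f', ρ, ι, w', w'',
    { exact := hexact, mono_f := inferInstance, epi_g := hepiρ }, hse''⟩

open CategoryTheory.Abelian.Pseudoelement in
lemma FinLength.ext {B : C} (hB : FinLength B) :
    ∀ {A E : C}, FinLength A → ∀ (f : A ⟶ E) (g : E ⟶ B) (w : f ≫ g = 0),
      (ShortComplex.mk f g w).ShortExact → FinLength E := by
  induction hB with
  | of_isZero B hz =>
    intro A E hA f g w hse
    haveI : Mono f := hse.mono_f
    have hepi : Epi f := by
      apply epi_of_pseudo_surjective
      intro e
      have : g e = 0 := by rw [hz.eq_of_tgt g 0, Abelian.Pseudoelement.zero_apply]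
      exact pseudo_exact_of_exact hse.exact e this
    haveI := hepi
    haveI : IsIso f := isIso_of_mono_of_epi f
    exact hA.of_iso' (asIso f)
  | of_extension s z wz hse₂ hXB hsimple IH =>
    intro A E hA f g w hse
    obtain ⟨E', f', ρ, ι, w', w'', hse1, hse2⟩ := restrictExt f g w hse s z wz hse₂
    have hE' : FinLength E' := IH hA f' ρ w' hse1
    exact FinLength.of_extension ι (g ≫ z) w'' hse2 hE' hsimple

lemma finLength_op {X : C} (h : FinLength X) : FinLength (Opposite.op X) := by
  induction h with
  | of_isZero X hz => exact FinLength.of_isZero _ hz.op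
  | of_extension f g w hse hX hsimple IH =>
    rename_i X₁ Y₁ Z₁
    haveI := hsimple
    have hZ : FinLength (Opposite.op Z₁) := finLength_of_simple simple_op
    exact FinLength.ext IH hZ g.op f.op _ hse.op

open CategoryTheory.Abelian.Pseudoelement in
lemma epi_of_factor_kernel {V W Z : C} (ρ : V ⟶ W) (q : W ⟶ Z) (hepi : Epi (ρ ≫ q))
    (τ : kernel q ⟶ V) (hτ : τ ≫ ρ = kernel.ι q) : Epi ρ := by
  apply CategoryTheory.Abelian.epi_of_cokernel_π_eq_zero
  apply zero_morphism_ext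
  intro w
  haveI := hepi
  obtain ⟨v, hv⟩ := pseudo_surjective_of_epi (ρ ≫ q) (q w)
  have heq : q w = q (ρ v) := by
    rw [← hv, Abelian.Pseudoelement.comp_apply]
  obtain ⟨z', hz'0, hsub⟩ := sub_of_eq_image q w (ρ v) heq
  have hcρv : (cokernel.π ρ) (ρ v) = 0 := by
    rw [← Abelian.Pseudoelement.comp_apply, cokernel.condition,
      Abelian.Pseudoelement.zero_apply]
  have h1 : (cokernel.π ρ) z' = (cokernel.π ρ) w := hsub _ _ hcρv
  have hexact : (ShortComplex.mk (kernel.ι q) q (kernel.condition q)).Exact :=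
    ShortComplex.exact_of_f_is_kernel _ (kernelIsKernel _)
  obtain ⟨u, hu⟩ := pseudo_exact_of_exact hexact z' hz'0
  have h2 : (cokernel.π ρ) z' = 0 := by
    have hcomp : kernel.ι q ≫ cokernel.π ρ = 0 := by
      rw [← hτ, Category.assoc, cokernel.condition, comp_zero]
    rw [← hu, ← Abelian.Pseudoelement.comp_apply, hcomp, Abelian.Pseudoelement.zero_apply]
  rw [← h1]
  exact h2

lemma rightApprox {S : C} [Simple S] {M : C} (hM : FinLength M) :
    ∃ (T : C) (t : T ⟶ M), Mono t ∧ SClosure S T ∧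
      ∀ (X' : C), SClosure S X' → ∀ h : X' ⟶ M, ∃ u : X' ⟶ T, u ≫ t = h := by
  induction hM with
  | of_isZero M hz =>
    exact ⟨M, 𝟙 M, inferInstance, SClosure.of_isZero _ hz,
      fun X' _ h => ⟨h, Category.comp_id h⟩⟩
  | of_extension j p w hse hX hsimple IH =>
    rename_i X Mobj Z
    obtain ⟨T, t, tmono, tS, tfac⟩ := IH
    haveI := tmono
    haveI := hsimple
    haveI : Mono j := hse.mono_f
    haveI : Epi p := hse.epi_g
    by_cases hcase : ∀ (X₀ : C), SClosure S X₀ → ∀ h₀ : X₀ ⟶ Mobj, h₀ ≫ p = 0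
    · refine ⟨T, t ≫ j, mono_comp _ _, tS, ?_⟩
      intro X' hX' h
      have h0 : h ≫ p = 0 := hcase X' hX' h
      obtain ⟨l, hl⟩ := KernelFork.IsLimit.lift' hse.fIsKernel h h0
      have hl' : l ≫ j = h := hl
      obtain ⟨u, hu⟩ := tfac X' hX' l
      exact ⟨u, by rw [← Category.assoc, hu, hl']⟩
    · push_neg at hcase
      obtain ⟨X₀, hX₀, h₀, hp0⟩ := hcase
      haveI : Epi (h₀ ≫ p) := epi_of_nonzero_to_simple hp0
      let φ : T ⊞ X₀ ⟶ Mobj := biprod.desc (t ≫ j) h₀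
      have hTX₀ : SClosure S (T ⊞ X₀) := SClosure.biprod tS hX₀
      let e := Abelian.factorThruImage φ
      let wM := Abelian.image.ι φ
      have hW : SClosure S (Abelian.image φ) := hTX₀.quot e inferInstance
      refine ⟨Abelian.image φ, wM, inferInstance, hW, ?_⟩
      intro X' hX' h
      let e_h := Abelian.factorThruImage h
      let m_I := Abelian.image.ι h
      have hI : SClosure S (Abelian.image h) := hX'.quot e_h inferInstance
      let φ' : Abelian.image φ ⊞ Abelian.image h ⟶ Mobj := biprod.desc wM m_I
      let e' := Abelian.factorThruImage φ'
      let w' := Abelian.image.ι φ'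
      have hW' : SClosure S (Abelian.image φ') := (SClosure.biprod hW hI).quot e' inferInstance
      let ρ : Abelian.image φ ⟶ Abelian.image φ' := biprod.inl ≫ e'
      have hρw : ρ ≫ w' = wM := by
        show (biprod.inl ≫ e') ≫ w' = wM
        rw [Category.assoc, Abelian.image.fac]
        exact biprod.inl_desc _ _
      let ιI : Abelian.image h ⟶ Abelian.image φ' := biprod.inr ≫ e'
      have hιI : ιI ≫ w' = m_I := by
        show (biprod.inr ≫ e') ≫ w' = m_I
        rw [Category.assoc, Abelian.image.fac]
        exact biprod.inr_desc _ _
      let q : Abelian.image φ' ⟶ Z := w' ≫ p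
      haveI h1 : Epi (φ ≫ p) :=
        epi_of_epi_fac (show biprod.inr ≫ (φ ≫ p) = h₀ ≫ p by
          rw [← Category.assoc]; congr 1; exact biprod.inr_desc _ _)
      haveI h2 : Epi (wM ≫ p) :=
        epi_of_epi_fac (show e ≫ (wM ≫ p) = φ ≫ p by
          rw [← Category.assoc, Abelian.image.fac])
      have h3 : Epi (ρ ≫ q) := by
        have heqq : ρ ≫ q = wM ≫ p := by
          show ρ ≫ w' ≫ p = wM ≫ p
          rw [← Category.assoc, hρw]
        exact heqq ▸ h2
      have hK : SClosure S (kernel q) := hW'.sub (kernel.ι q) inferInstance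
      have hkp : (kernel.ι q ≫ w') ≫ p = 0 := by
        rw [Category.assoc]; exact kernel.condition q
      obtain ⟨κ, hκ⟩ := KernelFork.IsLimit.lift' hse.fIsKernel (kernel.ι q ≫ w') hkp
      have hκ' : κ ≫ j = kernel.ι q ≫ w' := hκ
      obtain ⟨u₀, hu₀⟩ := tfac (kernel q) hK κ
      let τ : kernel q ⟶ Abelian.image φ := u₀ ≫ biprod.inl ≫ e
      have hτρ : τ ≫ ρ = kernel.ι q := by
        rw [← cancel_mono w']
        calc (τ ≫ ρ) ≫ w' = τ ≫ wM := by rw [Category.assoc, hρw]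
          _ = u₀ ≫ biprod.inl ≫ (e ≫ wM) := by
              show (u₀ ≫ biprod.inl ≫ e) ≫ wM = _
              simp only [Category.assoc]
          _ = u₀ ≫ biprod.inl ≫ φ := by rw [Abelian.image.fac]
          _ = u₀ ≫ t ≫ j := by rw [biprod.inl_desc]
          _ = (u₀ ≫ t) ≫ j := by rw [Category.assoc]
          _ = κ ≫ j := by rw [hu₀]
          _ = kernel.ι q ≫ w' := hκ'
      have hρepi : Epi ρ := epi_of_factor_kernel ρ q h3 τ hτρ
      have hρmono : Mono ρ := by
        have : Mono (ρ ≫ w') := by rw [hρw]; infer_instance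
        exact mono_of_mono ρ w'
      haveI := hρepi
      haveI := hρmono
      haveI : IsIso ρ := isIso_of_mono_of_epi ρ
      refine ⟨e_h ≫ ιI ≫ inv ρ, ?_⟩
      have hinv : inv ρ ≫ wM = w' := by
        rw [IsIso.inv_comp_eq, hρw]
      calc (e_h ≫ ιI ≫ inv ρ) ≫ wM = e_h ≫ ιI ≫ (inv ρ ≫ wM) := by
            simp only [Category.assoc]
        _ = e_h ≫ ιI ≫ w' := by rw [hinv]
        _ = e_h ≫ m_I := by rw [hιI]
        _ = h := Abelian.image.fac h

/-- If every object of the abelian category `C` has finite length, then for every simple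
object `S` the subcategory `⟨S⟩` is functorially finite: every object admits a left
`⟨S⟩`-approximation and a right `⟨S⟩`-approximation. -/
theorem statement1 (hlen : ∀ X : C, FinLength X) (S : C) [Simple S] :
    (∀ M : C, ∃ (X : C) (g : M ⟶ X), SClosure S X ∧
      ∀ (X' : C), SClosure S X' → ∀ h : M ⟶ X', ∃ u : X ⟶ X', g ≫ u = h) ∧
    (∀ M : C, ∃ (X : C) (f : X ⟶ M), SClosure S X ∧
      ∀ (X' : C), SClosure S X' → ∀ h : X' ⟶ M, ∃ u : X' ⟶ X, u ≫ f = h) := by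
  constructor
  · intro M
    haveI : Simple (Opposite.op S) := simple_op
    have hM : FinLength (Opposite.op M) := finLength_op (hlen M)
    obtain ⟨T, t, _, hT, hfac⟩ := rightApprox (S := Opposite.op S) hM
    refine ⟨T.unop, t.unop, hT.unop, ?_⟩
    intro X' hX' h
    obtain ⟨u, hu⟩ := hfac (Opposite.op X') hX'.op h.op
    refine ⟨u.unop, ?_⟩
    have := congrArg Quiver.Hom.unop hu
    simpa using this
  · intro M
    obtain ⟨T, t, _, hT, hfac⟩ := rightApprox (S := S) (hlen M)
    exact ⟨T, t, hT, fun X' hX' h => hfac X' hX' h⟩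
end

section
/- Let k be a field with char(k) ≠ 2, let Σ be an S-graph all of whose vertices are internal, and let n be a positive even integer compatible with Σ. If some vertex of Σ has odd degree, then the graded Brauer graph algebra A(Σ,n) is not n-Calabi–Yau: there exists no linear functional tr : A(Σ,n)^n → k which is both symmetric (tr(ab) = (−1)^{|a||b|} tr(ba) for all homogeneous a, b with |a| + |b| = n) and nondegenerate (for every nonzero homogeneous a ∈ A(Σ,n) there is a homogeneous b with tr(ab) ≠ 0). -/
/-- An S-graph all of whose vertices are internal: a finite set of halfedges with a
fixed-point-free involution `τ` (whose orbits are the edges), a vertex map `vtx`, a cyclic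
order on the halfedges at each vertex (encoded by the cyclic successor map `succ`), and a
positive integer `d i = d(i, i+1)` for every halfedge `i`. -/
structure SGraph where
  /-- the type of halfedges -/
  H : Type
  fintypeH : Fintype H
  decEqH : DecidableEq H
  /-- the type of vertices -/
  V : Type
  fintypeV : Fintype V
  decEqV : DecidableEq V
  /-- the edge involution -/
  τ : H → H
  τ_invol : ∀ i, τ (τ i) = i
  τ_ne : ∀ i, τ i ≠ i
  /-- the vertex to which a halfedge is attached -/
  vtx : H → V
  /-- the cyclic successor `i ↦ i + 1` among the halfedges at a common vertex -/
  succ : H → H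
  vtx_succ : ∀ i, vtx (succ i) = vtx i
  cyclic : ∀ i j, vtx i = vtx j → ∃ m, succ^[m] i = j
  /-- `d i = d(i, i+1)` -/
  d : H → ℕ
  d_pos : ∀ i, 0 < d i

attribute [instance] SGraph.fintypeH SGraph.decEqH SGraph.fintypeV SGraph.decEqV

namespace SGraph

variable (Sg : SGraph)

/-- The halfedges attached to a given vertex. -/
def halfedgesAt (v : Sg.V) : Finset Sg.H := Finset.univ.filter fun i => Sg.vtx i = v

/-- The degree of a vertex: the sum of `d(i, i+1)` over the halfedges at it. -/
def deg (v : Sg.V) : ℕ := ∑ i ∈ Sg.halfedgesAt v, Sg.d i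

/-- The valency of a vertex: the number of halfedges at it. -/
def val (v : Sg.V) : ℕ := (Sg.halfedgesAt v).card

/-- The number of `succ`-steps from the halfedge `j` to the halfedge `i`
(`0` by convention if `i` is not on the `succ`-orbit of `j`). -/
noncomputable def distTo (j i : Sg.H) : ℕ := by
  classical
  exact if h : ∃ m, Sg.succ^[m] j = i then Nat.find h else 0

/-- `d(j, i)` for halfedges `j`, `i` at a common vertex:
`d(j,i) = d(j,j+1) + d(j+1,j+2) + ⋯ + d(i−1,i)` (so `d(j,j) = 0`). -/
noncomputable def dTo (j i : Sg.H) : ℕ :=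
  ∑ m ∈ Finset.range (Sg.distTo j i), Sg.d (Sg.succ^[m] j)

/-- The setoid identifying a halfedge with its partner under `τ`; its quotient is the set
of edges. -/
def edgeSetoid : Setoid Sg.H where
  r i j := j = i ∨ j = Sg.τ i
  iseqv := by
    refine ⟨fun i => Or.inl rfl, ?_, ?_⟩
    · rintro i j (rfl | rfl)
      · exact Or.inl rfl
      · exact Or.inr (Sg.τ_invol i).symm
    · rintro i j k (rfl | rfl) h
      · exact h
      · rcases h with rfl | rfl
        · exact Or.inr rfl
        · exact Or.inl (Sg.τ_invol i)

/-- The edges of the S-graph: `τ`-orbits of halfedges. -/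
def Edge : Type := Quotient Sg.edgeSetoid

noncomputable instance : Fintype Sg.Edge := by
  classical
  have : Finite Sg.Edge :=
    Finite.of_surjective (Quotient.mk Sg.edgeSetoid) fun q => Quot.exists_rep q
  exact Fintype.ofFinite _

/-- The edge containing a halfedge. -/
def edgeOf (i : Sg.H) : Sg.Edge := Quotient.mk Sg.edgeSetoid i

/-- An orientation of an S-graph compatible with the grading data: a map
`ε : H → ℤ/2` with `ε(τ i) ≠ ε(i)` and `d(i,i+1) ≡ ε(i) + ε(i+1) (mod 2)` for all `i`. -/
def Orientable : Prop :=
  ∃ ε : Sg.H → ZMod 2, (∀ i, ε (Sg.τ i) ≠ ε i) ∧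
    ∀ i, (Sg.d i : ZMod 2) = ε i + ε (Sg.succ i)

end SGraph

namespace SGraph

/-- The free `k`-algebra on the generators of the quiver presenting the graded Brauer
graph algebra: one idempotent generator for each edge (quiver vertex) and one arrow
generator `a_i` for each halfedge `i`. -/
abbrev FA (k : Type) [Field k] (Sg : SGraph) : Type := FreeAlgebra k (Sg.Edge ⊕ Sg.H)

/-- The idempotent generator `e_f` at the quiver vertex given by the edge `f`. -/
noncomputable def gE (k : Type) [Field k] (Sg : SGraph) (f : Sg.Edge) : FA k Sg :=
  FreeAlgebra.ι k (Sum.inl f)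

/-- The arrow generator `a_i` for the halfedge `i`, of degree `d(i, i+1)`. -/
noncomputable def gA (k : Type) [Field k] (Sg : SGraph) (i : Sg.H) : FA k Sg :=
  FreeAlgebra.ι k (Sum.inr i)

/-- The cycle `s_i = a_{i-1} ⋯ a_{i+1} a_i` going once around the vertex of `i`,
starting and ending at the edge of `i`. -/
noncomputable def loopOnce (k : Type) [Field k] (Sg : SGraph) (i : Sg.H) : FA k Sg :=
  ((List.range (Sg.val (Sg.vtx i))).reverse.map fun m => gA k Sg (Sg.succ^[m] i)).prod

/-- The cycle `c_i = (a_{i-1} ⋯ a_{i+1} a_i)^{n / deg v}` based at the edge of `i`,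
going `n / deg v` times around the vertex `v` of `i`. -/
noncomputable def cyc (k : Type) [Field k] (Sg : SGraph) (n : ℕ) (i : Sg.H) : FA k Sg :=
  loopOnce k Sg i ^ (n / Sg.deg (Sg.vtx i))

/-- The path `a^r_{i,j} = a_{i-1} ⋯ a_{j+1} a_j (a_{j-1} ⋯ a_{j+1} a_j)^r` from the
edge of `j` to the edge of `i` around their common vertex. -/
noncomputable def pathElem (k : Type) [Field k] (Sg : SGraph) (j i : Sg.H) (r : ℕ) :
    FA k Sg :=
  ((List.range (Sg.distTo j i)).reverse.map fun m => gA k Sg (Sg.succ^[m] j)).prod *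
    loopOnce k Sg j ^ r

/-- The defining relations of the graded Brauer graph algebra `A(Σ,n)`, presented as a
quotient of a free algebra: the quiver-vertex idempotent relations
(`e_f e_g = δ_{fg} e_f`, `∑ e_f = 1`, source/target relations for the arrows), the
monomial relations (i) `a_j a_i = 0` whenever `i+1` and `j` lie on the same edge but
`i+1 ≠ j`, and the cycle relations (ii) `c_i = (−1)^{n−1} c_{τ i}`. -/
inductive Rel (k : Type) [Field k] (Sg : SGraph) (n : ℕ) : FA k Sg → FA k Sg → Prop
  | orth (f g : Sg.Edge) : f ≠ g → Rel k Sg n (gE k Sg f * gE k Sg g) 0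
  | idem (f : Sg.Edge) : Rel k Sg n (gE k Sg f * gE k Sg f) (gE k Sg f)
  | sum_one : Rel k Sg n (∑ f : Sg.Edge, gE k Sg f) 1
  | target (i : Sg.H) :
      Rel k Sg n (gE k Sg (Sg.edgeOf (Sg.succ i)) * gA k Sg i) (gA k Sg i)
  | source (i : Sg.H) :
      Rel k Sg n (gA k Sg i * gE k Sg (Sg.edgeOf i)) (gA k Sg i)
  | comp_zero (i j : Sg.H) : Sg.edgeOf (Sg.succ i) = Sg.edgeOf j → Sg.succ i ≠ j →
      Rel k Sg n (gA k Sg j * gA k Sg i) 0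
  | cycle (i : Sg.H) :
      Rel k Sg n (cyc k Sg n i) (((-1 : k) ^ (n - 1)) • cyc k Sg n (Sg.τ i))

/-- The graded Brauer graph algebra `A(Σ,n)` of an S-graph with only internal vertices:
the quotient of the free algebra on the presenting quiver by the defining relations. -/
abbrev BGA (k : Type) [Field k] (Sg : SGraph) (n : ℕ) : Type := RingQuot (Rel k Sg n)

/-- The quotient map onto the graded Brauer graph algebra. -/
noncomputable def mkBGA (k : Type) [Field k] (Sg : SGraph) (n : ℕ) :
    FA k Sg →ₐ[k] BGA k Sg n :=
  RingQuot.mkAlgHom k (Rel k Sg n)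

/-- The weight of a generator: idempotents have degree `0`, and the arrow `a_i` has
degree `d(i, i+1)`. -/
def wt (Sg : SGraph) : (Sg.Edge ⊕ Sg.H) → ℕ := Sum.elim (fun _ => 0) Sg.d

/-- The degree-`m` homogeneous component of the free algebra: the span of the products
of generators of total weight `m`. -/
noncomputable def FAcomp (k : Type) [Field k] (Sg : SGraph) (m : ℕ) :
    Submodule k (FA k Sg) :=
  Submodule.span k
    { x | ∃ l : List (Sg.Edge ⊕ Sg.H),
        (l.map (wt Sg)).sum = m ∧ x = (l.map (FreeAlgebra.ι k)).prod }

/-- The degree-`m` homogeneous component `A(Σ,n)^m` of the graded Brauer graph algebra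
(the relations being homogeneous, these components form a grading). -/
noncomputable def BGAcomp (k : Type) [Field k] (Sg : SGraph) (n m : ℕ) :
    Submodule k (BGA k Sg n) :=
  (FAcomp k Sg m).map (mkBGA k Sg n).toLinearMap

end SGraph

namespace SGraph

/-! ### Auxiliary facts about the cyclic structure at a vertex -/

lemma mem_halfedgesAt {Sg : SGraph} {i : Sg.H} {v : Sg.V} :
    i ∈ Sg.halfedgesAt v ↔ Sg.vtx i = v := by
  simp [halfedgesAt]

lemma vtx_iterate (Sg : SGraph) (j : Sg.H) (m : ℕ) :
    Sg.vtx (Sg.succ^[m] j) = Sg.vtx j := by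
  induction m with
  | zero => rfl
  | succ m ih => rw [Function.iterate_succ_apply', Sg.vtx_succ, ih]

lemma exists_pos_period (Sg : SGraph) (j : Sg.H) : ∃ m, 0 < m ∧ Sg.succ^[m] j = j := by
  obtain ⟨m, hm⟩ := Sg.cyclic (Sg.succ j) j (Sg.vtx_succ j)
  exact ⟨m + 1, Nat.succ_pos _, by rwa [Function.iterate_succ_apply]⟩

lemma minPer_pos (Sg : SGraph) (j : Sg.H) : 0 < Function.minimalPeriod Sg.succ j := by
  obtain ⟨m, hm, h⟩ := exists_pos_period Sg j
  exact Function.IsPeriodicPt.minimalPeriod_pos hm h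

lemma orbit_image (Sg : SGraph) (j : Sg.H) :
    (Finset.range (Function.minimalPeriod Sg.succ j)).image (fun m => Sg.succ^[m] j)
      = Sg.halfedgesAt (Sg.vtx j) := by
  ext a
  simp only [Finset.mem_image, Finset.mem_range, mem_halfedgesAt]
  constructor
  · rintro ⟨m, hm, rfl⟩
    exact vtx_iterate Sg j m
  · intro ha
    obtain ⟨m, rfl⟩ := Sg.cyclic j a ha.symm
    exact ⟨m % _, Nat.mod_lt _ (minPer_pos Sg j), Function.iterate_mod_minimalPeriod_eq⟩

lemma minPer_eq_val (Sg : SGraph) (j : Sg.H) :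
    Function.minimalPeriod Sg.succ j = Sg.val (Sg.vtx j) := by
  rw [val, ← orbit_image Sg j,
    Finset.card_image_of_injOn
      (by rw [Finset.coe_range]; exact Function.iterate_injOn_Iio_minimalPeriod),
    Finset.card_range]

lemma succ_iterate_val (Sg : SGraph) (j : Sg.H) : Sg.succ^[Sg.val (Sg.vtx j)] j = j := by
  rw [← minPer_eq_val]
  exact Function.iterate_minimalPeriod

lemma succ_iterate_mul_val (Sg : SGraph) (j : Sg.H) (r : ℕ) :
    Sg.succ^[r * Sg.val (Sg.vtx j)] j = j := by
  induction r with
  | zero => simp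
  | succ r ih => rw [Nat.succ_mul, Function.iterate_add_apply, succ_iterate_val, ih]

lemma sum_d_range_val (Sg : SGraph) (j : Sg.H) :
    ∑ m ∈ Finset.range (Sg.val (Sg.vtx j)), Sg.d (Sg.succ^[m] j) = Sg.deg (Sg.vtx j) := by
  have hinj : ∀ x ∈ Finset.range (Function.minimalPeriod Sg.succ j),
      ∀ y ∈ Finset.range (Function.minimalPeriod Sg.succ j),
      Sg.succ^[x] j = Sg.succ^[y] j → x = y := by
    intro a ha b hb hab
    exact Function.iterate_injOn_Iio_minimalPeriod
      (by simpa using Finset.mem_range.mp ha) (by simpa using Finset.mem_range.mp hb) hab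
  rw [← minPer_eq_val, deg, ← orbit_image Sg j, Finset.sum_image hinj]

lemma val_pos (Sg : SGraph) (j : Sg.H) : 0 < Sg.val (Sg.vtx j) :=
  Finset.card_pos.mpr ⟨j, mem_halfedgesAt.mpr rfl⟩

lemma deg_pos (Sg : SGraph) (j : Sg.H) : 0 < Sg.deg (Sg.vtx j) :=
  Finset.sum_pos (fun i _ => Sg.d_pos i) ⟨j, mem_halfedgesAt.mpr rfl⟩

lemma d_le_deg (Sg : SGraph) (j : Sg.H) : Sg.d j ≤ Sg.deg (Sg.vtx j) :=
  Finset.single_le_sum (fun i _ => Nat.zero_le (Sg.d i)) (mem_halfedgesAt.mpr rfl)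

lemma edgeOf_τ (Sg : SGraph) (i : Sg.H) : Sg.edgeOf (Sg.τ i) = Sg.edgeOf i :=
  Quotient.sound (Or.inr (Sg.τ_invol i).symm)

lemma out_edgeOf (Sg : SGraph) (j : Sg.H) :
    Quotient.out (Sg.edgeOf j) = j ∨ Quotient.out (Sg.edgeOf j) = Sg.τ j := by
  have h : Sg.edgeSetoid.r (Quotient.out (Sg.edgeOf j)) j :=
    Quotient.exact (Quotient.out_eq (Sg.edgeOf j))
  rcases h with h | h
  · exact Or.inl h.symm
  · right
    have h2 := congrArg Sg.τ h
    rw [Sg.τ_invol] at h2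
    exact h2.symm

/-! ### The number of arrows in the cycle `c_i`, and signs -/

/-- Number of arrows in the cycle `c_i`. -/
def Nsteps (Sg : SGraph) (n : ℕ) (j : Sg.H) : ℕ := n / Sg.deg (Sg.vtx j) * Sg.val (Sg.vtx j)

lemma Nsteps_pos (Sg : SGraph) (n : ℕ) (hn : 0 < n) (hdvd : ∀ v : Sg.V, Sg.deg v ∣ n)
    (j : Sg.H) : 0 < Nsteps Sg n j :=
  Nat.mul_pos (Nat.div_pos (Nat.le_of_dvd hn (hdvd _)) (deg_pos Sg j)) (val_pos Sg j)

lemma Nsteps_congr (Sg : SGraph) (n : ℕ) {i j : Sg.H} (h : Sg.vtx i = Sg.vtx j) :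
    Nsteps Sg n i = Nsteps Sg n j := by unfold Nsteps; rw [h]

lemma succ_iterate_Nsteps (Sg : SGraph) (n : ℕ) (j : Sg.H) :
    Sg.succ^[Nsteps Sg n j] j = j := succ_iterate_mul_val Sg j _

noncomputable def sgn (k : Type) [Field k] (Sg : SGraph) (j : Sg.H) : k :=
  if Quotient.out (Sg.edgeOf j) = j then 1 else -1

lemma sgn_ne_zero (k : Type) [Field k] (Sg : SGraph) (j : Sg.H) : sgn k Sg j ≠ 0 := by
  unfold sgn
  split_ifs
  · exact one_ne_zero
  · exact neg_ne_zero.mpr one_ne_zero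

lemma sgn_τ (k : Type) [Field k] (Sg : SGraph) (j : Sg.H) :
    sgn k Sg (Sg.τ j) = - sgn k Sg j := by
  unfold sgn
  rw [edgeOf_τ]
  rcases out_edgeOf Sg j with h | h
  · have hne : Quotient.out (Sg.edgeOf j) ≠ Sg.τ j := by
      rw [h]; exact fun hc => Sg.τ_ne j hc.symm
    rw [if_neg hne, if_pos h]
  · have hne : Quotient.out (Sg.edgeOf j) ≠ j := by rw [h]; exact Sg.τ_ne j
    rw [if_pos h, if_neg hne]; norm_num

/-! ### A representation of the graded Brauer graph algebra -/

/-- Basis of the representation: idempotents, paths, socle elements. -/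
inductive Bas (Sg : SGraph) : Type where
  | E : Sg.Edge → Bas Sg
  | P : Sg.H → ℕ → Bas Sg
  | Z : Sg.Edge → Bas Sg

/-- The underlying module of the representation. -/
abbrev Rmod (k : Type) [Field k] (Sg : SGraph) : Type := Bas Sg →₀ k

section Rep

variable (k : Type) [Field k] (Sg : SGraph) (n : ℕ)

attribute [local instance] Classical.propDecidable

/-- The result of pushing a path one more step: either a longer path or (±) the socle. -/
noncomputable def vout (j : Sg.H) (ℓ : ℕ) : Rmod k Sg :=
  if ℓ = Nsteps Sg n j then sgn k Sg j • Finsupp.single (Bas.Z (Sg.edgeOf j)) 1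
  else Finsupp.single (Bas.P j ℓ) 1

/-- The action of the generators on basis elements. -/
noncomputable def actFun : (Sg.Edge ⊕ Sg.H) → Bas Sg → Rmod k Sg
  | Sum.inl f, Bas.E g => if g = f then Finsupp.single (Bas.E g) 1 else 0
  | Sum.inl f, Bas.P j ℓ =>
      if Sg.edgeOf (Sg.succ^[ℓ] j) = f then Finsupp.single (Bas.P j ℓ) 1 else 0
  | Sum.inl f, Bas.Z g => if g = f then Finsupp.single (Bas.Z g) 1 else 0
  | Sum.inr i, Bas.E f => if Sg.edgeOf i = f then vout k Sg n i 1 else 0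
  | Sum.inr i, Bas.P j ℓ =>
      if Sg.succ^[ℓ] j = i ∧ 1 ≤ ℓ ∧ ℓ < Nsteps Sg n j then vout k Sg n j (ℓ + 1) else 0
  | Sum.inr _, Bas.Z _ => 0

@[simp] lemma actFun_inl_E (f g : Sg.Edge) :
    actFun k Sg n (Sum.inl f) (Bas.E g)
      = if g = f then Finsupp.single (Bas.E g) (1 : k) else 0 := rfl

@[simp] lemma actFun_inl_P (f : Sg.Edge) (j : Sg.H) (ℓ : ℕ) :
    actFun k Sg n (Sum.inl f) (Bas.P j ℓ)
      = if Sg.edgeOf (Sg.succ^[ℓ] j) = f then Finsupp.single (Bas.P j ℓ) (1 : k) else 0 := rfl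

@[simp] lemma actFun_inl_Z (f g : Sg.Edge) :
    actFun k Sg n (Sum.inl f) (Bas.Z g)
      = if g = f then Finsupp.single (Bas.Z g) (1 : k) else 0 := rfl

@[simp] lemma actFun_inr_E (i : Sg.H) (f : Sg.Edge) :
    actFun k Sg n (Sum.inr i) (Bas.E f)
      = if Sg.edgeOf i = f then vout k Sg n i 1 else 0 := rfl

@[simp] lemma actFun_inr_P (i j : Sg.H) (ℓ : ℕ) :
    actFun k Sg n (Sum.inr i) (Bas.P j ℓ)
      = if Sg.succ^[ℓ] j = i ∧ 1 ≤ ℓ ∧ ℓ < Nsteps Sg n j then vout k Sg n j (ℓ + 1) else 0 :=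
  rfl

@[simp] lemma actFun_inr_Z (i : Sg.H) (f : Sg.Edge) :
    actFun k Sg n (Sum.inr i) (Bas.Z f) = 0 := rfl

/-- The action of a generator as a linear endomorphism. -/
noncomputable def act (x : Sg.Edge ⊕ Sg.H) : Module.End k (Rmod k Sg) :=
  Finsupp.lift (Rmod k Sg) k (Bas Sg) (actFun k Sg n x)

@[simp] lemma act_single (x : Sg.Edge ⊕ Sg.H) (b : Bas Sg) (c : k) :
    act k Sg n x (Finsupp.single b c) = c • actFun k Sg n x b := by
  rw [act]
  erw [Finsupp.lift_apply]
  exact Finsupp.sum_single_index (zero_smul k _)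

lemma op_ext {k : Type} [Field k] {Sg : SGraph} {L1 L2 : Module.End k (Rmod k Sg)}
    (h : ∀ b : Bas Sg, L1 (Finsupp.single b 1) = L2 (Finsupp.single b 1)) : L1 = L2 := by
  apply Finsupp.lhom_ext
  intro b c
  have h1 : (Finsupp.single b c : Rmod k Sg) = c • Finsupp.single b 1 := by
    rw [Finsupp.smul_single, smul_eq_mul, mul_one]
  rw [h1, map_smul, map_smul, h]

/-- The representation of the free algebra. -/
noncomputable def rep : FA k Sg →ₐ[k] Module.End k (Rmod k Sg) :=
  FreeAlgebra.lift k (act k Sg n)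

@[simp] lemma rep_gE (f : Sg.Edge) :
    rep k Sg n (gE k Sg f) = act k Sg n (Sum.inl f) := FreeAlgebra.lift_ι_apply _ _

@[simp] lemma rep_gA (i : Sg.H) :
    rep k Sg n (gA k Sg i) = act k Sg n (Sum.inr i) := FreeAlgebra.lift_ι_apply _ _

/-- Composite of the arrow actions along `t` successive arrows starting at `i`. -/
noncomputable def opsFrom (i : Sg.H) (t : ℕ) : Module.End k (Rmod k Sg) :=
  ((List.range t).reverse.map fun m => act k Sg n (Sum.inr (Sg.succ^[m] i))).prod

lemma opsFrom_zero (i : Sg.H) : opsFrom k Sg n i 0 = 1 := rfl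

lemma opsFrom_succ (i : Sg.H) (t : ℕ) :
    opsFrom k Sg n i (t + 1)
      = act k Sg n (Sum.inr (Sg.succ^[t] i)) * opsFrom k Sg n i t := by
  unfold opsFrom
  rw [List.range_succ, List.reverse_append]
  simp

lemma opsFrom_one (i : Sg.H) : opsFrom k Sg n i 1 = act k Sg n (Sum.inr i) := by
  rw [opsFrom_succ, opsFrom_zero, mul_one, Function.iterate_zero_apply]

lemma opsFrom_add (i : Sg.H) (s t : ℕ) :
    opsFrom k Sg n i (s + t)
      = opsFrom k Sg n (Sg.succ^[t] i) s * opsFrom k Sg n i t := by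
  induction s with
  | zero => rw [Nat.zero_add, opsFrom_zero, one_mul]
  | succ s ih =>
    rw [show s + 1 + t = (s + t) + 1 from by omega, opsFrom_succ, ih,
      show Sg.succ^[s + t] i = Sg.succ^[s] (Sg.succ^[t] i) from by
        rw [← Function.iterate_add_apply], ← mul_assoc, ← opsFrom_succ]

lemma opsFrom_pow (j : Sg.H) (r : ℕ) :
    (opsFrom k Sg n j (Sg.val (Sg.vtx j))) ^ r = opsFrom k Sg n j (r * Sg.val (Sg.vtx j)) := by
  induction r with
  | zero => rw [pow_zero, Nat.zero_mul, opsFrom_zero]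
  | succ r ih =>
    rw [pow_succ, ih, Nat.succ_mul, opsFrom_add, succ_iterate_val]

lemma rep_loopOnce (j : Sg.H) :
    rep k Sg n (loopOnce k Sg j) = opsFrom k Sg n j (Sg.val (Sg.vtx j)) := by
  unfold loopOnce opsFrom
  rw [map_list_prod, List.map_map]
  refine congrArg List.prod (List.map_congr_left fun m _ => ?_)
  simp [Function.comp]

lemma rep_cyc (i : Sg.H) :
    rep k Sg n (cyc k Sg n i) = opsFrom k Sg n i (Nsteps Sg n i) := by
  unfold cyc Nsteps
  rw [map_pow, rep_loopOnce, opsFrom_pow]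

/-! Evaluation of the composite operators -/

lemma vout_of_ne {j : Sg.H} {ℓ : ℕ} (h : ℓ ≠ Nsteps Sg n j) :
    vout k Sg n j ℓ = Finsupp.single (Bas.P j ℓ) 1 := if_neg h

lemma vout_of_eq (j : Sg.H) :
    vout k Sg n j (Nsteps Sg n j) = sgn k Sg j • Finsupp.single (Bas.Z (Sg.edgeOf j)) 1 :=
  if_pos rfl

lemma eop_vout (j : Sg.H) (ℓ : ℕ) :
    act k Sg n (Sum.inl (Sg.edgeOf (Sg.succ^[ℓ] j))) (vout k Sg n j ℓ) = vout k Sg n j ℓ := by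
  unfold vout
  split_ifs with h
  · have hj : Sg.succ^[ℓ] j = j := by rw [h]; exact succ_iterate_Nsteps Sg n j
    rw [hj, map_smul, act_single, actFun_inl_Z, if_pos rfl, one_smul]
  · rw [act_single, actFun_inl_P, if_pos rfl, one_smul]

lemma aop_vout_zero {m j : Sg.H} {ℓ : ℕ} (h : Sg.succ^[ℓ] j ≠ m) :
    act k Sg n (Sum.inr m) (vout k Sg n j ℓ) = 0 := by
  unfold vout
  split_ifs with h2
  · rw [map_smul, act_single, actFun_inr_Z, smul_zero, smul_zero]
  · rw [act_single, actFun_inr_P, if_neg (fun hc => h hc.1), smul_zero]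

lemma aop_vout_succ {j : Sg.H} {ℓ : ℕ} (h1 : 1 ≤ ℓ) (h2 : ℓ < Nsteps Sg n j) :
    act k Sg n (Sum.inr (Sg.succ^[ℓ] j)) (vout k Sg n j ℓ) = vout k Sg n j (ℓ + 1) := by
  rw [vout_of_ne k Sg n (Nat.ne_of_lt h2), act_single, actFun_inr_P,
    if_pos ⟨rfl, h1, h2⟩, one_smul]

lemma opsFrom_dead (x j : Sg.H) {s : ℕ} (hs : 0 < s) :
    opsFrom k Sg n x s (vout k Sg n j (Nsteps Sg n j)) = 0 := by
  obtain ⟨t, rfl⟩ : ∃ t, s = t + 1 := ⟨s - 1, by omega⟩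
  rw [opsFrom_add, Module.End.mul_apply, opsFrom_one, vout_of_eq, map_smul,
    act_single, actFun_inr_Z, smul_zero, smul_zero, map_zero]

lemma opsFrom_chain (j : Sg.H) (ℓ t : ℕ) (h1 : 1 ≤ ℓ) (h2 : ℓ + t ≤ Nsteps Sg n j) :
    opsFrom k Sg n (Sg.succ^[ℓ] j) t (vout k Sg n j ℓ) = vout k Sg n j (ℓ + t) := by
  induction t with
  | zero => rw [opsFrom_zero]; rfl
  | succ t ih =>
    rw [opsFrom_succ, Module.End.mul_apply, ih (by omega),
      show Sg.succ^[t] (Sg.succ^[ℓ] j) = Sg.succ^[ℓ + t] j from by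
        rw [← Function.iterate_add_apply, Nat.add_comm],
      aop_vout_succ k Sg n (by omega) (by omega)]
    rfl

lemma cycop_E (hn : 0 < n) (hdvd : ∀ v : Sg.V, Sg.deg v ∣ n) (i : Sg.H) (f : Sg.Edge) :
    opsFrom k Sg n i (Nsteps Sg n i) (Finsupp.single (Bas.E f) 1)
      = if Sg.edgeOf i = f then sgn k Sg i • Finsupp.single (Bas.Z (Sg.edgeOf i)) 1
        else 0 := by
  have hN : 0 < Nsteps Sg n i := Nsteps_pos Sg n hn hdvd i
  rw [show Nsteps Sg n i = (Nsteps Sg n i - 1) + 1 from by omega, opsFrom_add,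
    Module.End.mul_apply, opsFrom_one, act_single, actFun_inr_E, one_smul]
  by_cases hf : Sg.edgeOf i = f
  · rw [if_pos hf, if_pos hf, opsFrom_chain k Sg n i 1 _ (le_refl 1) (by omega),
      show 1 + (Nsteps Sg n i - 1) = Nsteps Sg n i from by omega, vout_of_eq]
  · rw [if_neg hf, if_neg hf, map_zero]

lemma cycop_P (hn : 0 < n) (hdvd : ∀ v : Sg.V, Sg.deg v ∣ n) (i j : Sg.H) (ℓ : ℕ) :
    opsFrom k Sg n i (Nsteps Sg n i) (Finsupp.single (Bas.P j ℓ) 1) = 0 := by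
  have hN : 0 < Nsteps Sg n i := Nsteps_pos Sg n hn hdvd i
  rw [show Nsteps Sg n i = (Nsteps Sg n i - 1) + 1 from by omega, opsFrom_add,
    Module.End.mul_apply, opsFrom_one, act_single, actFun_inr_P, one_smul]
  by_cases hc : Sg.succ^[ℓ] j = i ∧ 1 ≤ ℓ ∧ ℓ < Nsteps Sg n j
  · rw [if_pos hc]
    obtain ⟨hji, hl1, hlN⟩ := hc
    have hv : Sg.vtx i = Sg.vtx j := by rw [← hji, vtx_iterate]
    have hNN : Nsteps Sg n i = Nsteps Sg n j := Nsteps_congr Sg n hv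
    have hsucc : Sg.succ^[1] i = Sg.succ^[ℓ + 1] j := by
      rw [← hji, ← Function.iterate_add_apply, Nat.add_comm]
    rw [hsucc, hNN,
      show Nsteps Sg n j - 1 = ℓ + (Nsteps Sg n j - 1 - ℓ) from by omega,
      opsFrom_add, Module.End.mul_apply,
      opsFrom_chain k Sg n j (ℓ + 1) _ (by omega) (by omega),
      show ℓ + 1 + (Nsteps Sg n j - 1 - ℓ) = Nsteps Sg n j from by omega]
    exact opsFrom_dead k Sg n _ _ (by omega)
  · rw [if_neg hc, map_zero]

lemma cycop_Z (hn : 0 < n) (hdvd : ∀ v : Sg.V, Sg.deg v ∣ n) (i : Sg.H) (f : Sg.Edge) :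
    opsFrom k Sg n i (Nsteps Sg n i) (Finsupp.single (Bas.Z f) 1) = 0 := by
  have hN : 0 < Nsteps Sg n i := Nsteps_pos Sg n hn hdvd i
  rw [show Nsteps Sg n i = (Nsteps Sg n i - 1) + 1 from by omega, opsFrom_add,
    Module.End.mul_apply, opsFrom_one, act_single, actFun_inr_Z, smul_zero, map_zero]

end Rep

section RepRel

variable (k : Type) [Field k] (Sg : SGraph) (n : ℕ)

attribute [local instance] Classical.propDecidable

lemma repRel (hn : 0 < n) (hdvd : ∀ v : Sg.V, Sg.deg v ∣ n) (heven : Even n) :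
    ∀ ⦃x y : FA k Sg⦄, Rel k Sg n x y → rep k Sg n x = rep k Sg n y := by
  intro x y h
  induction h with
  | orth f g hfg =>
    rw [map_mul, map_zero, rep_gE, rep_gE]
    apply op_ext
    intro b
    cases b with
    | E g' =>
      rw [Module.End.mul_apply, LinearMap.zero_apply, act_single, actFun_inl_E, one_smul]
      split_ifs with h1
      · rw [act_single, actFun_inl_E, one_smul, if_neg (fun hh => hfg (hh.symm.trans h1))]
      · rw [map_zero]
    | P j ℓ =>
      rw [Module.End.mul_apply, LinearMap.zero_apply, act_single, actFun_inl_P, one_smul]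
      split_ifs with h1
      · rw [act_single, actFun_inl_P, one_smul, if_neg (fun hh => hfg (hh.symm.trans h1))]
      · rw [map_zero]
    | Z g' =>
      rw [Module.End.mul_apply, LinearMap.zero_apply, act_single, actFun_inl_Z, one_smul]
      split_ifs with h1
      · rw [act_single, actFun_inl_Z, one_smul, if_neg (fun hh => hfg (hh.symm.trans h1))]
      · rw [map_zero]
  | idem f =>
    rw [map_mul, rep_gE]
    apply op_ext
    intro b
    cases b with
    | E g' =>
      rw [Module.End.mul_apply, act_single, actFun_inl_E, one_smul]
      split_ifs with h1
      · rw [act_single, actFun_inl_E, one_smul, if_pos h1]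
      · rw [map_zero]
    | P j ℓ =>
      rw [Module.End.mul_apply, act_single, actFun_inl_P, one_smul]
      split_ifs with h1
      · rw [act_single, actFun_inl_P, one_smul, if_pos h1]
      · rw [map_zero]
    | Z g' =>
      rw [Module.End.mul_apply, act_single, actFun_inl_Z, one_smul]
      split_ifs with h1
      · rw [act_single, actFun_inl_Z, one_smul, if_pos h1]
      · rw [map_zero]
  | sum_one =>
    rw [map_sum, map_one]
    apply op_ext
    intro b
    rw [LinearMap.sum_apply, Module.End.one_apply]
    cases b with
    | E g =>
      simp only [rep_gE, act_single, actFun_inl_E, one_smul]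
      rw [Finset.sum_ite_eq]
      simp
    | P j ℓ =>
      simp only [rep_gE, act_single, actFun_inl_P, one_smul]
      rw [Finset.sum_ite_eq]
      simp
    | Z g =>
      simp only [rep_gE, act_single, actFun_inl_Z, one_smul]
      rw [Finset.sum_ite_eq]
      simp
  | target i =>
    rw [map_mul, rep_gE, rep_gA]
    apply op_ext
    intro b
    cases b with
    | E f =>
      rw [Module.End.mul_apply, act_single, actFun_inr_E, one_smul]
      split_ifs with h1
      · have h2 := eop_vout k Sg n i 1
        rwa [Function.iterate_one] at h2
      · rw [map_zero]
    | P j ℓ =>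
      rw [Module.End.mul_apply, act_single, actFun_inr_P, one_smul]
      split_ifs with h1
      · have h2 := eop_vout k Sg n j (ℓ + 1)
        rwa [show Sg.succ^[ℓ + 1] j = Sg.succ i from by
          rw [Function.iterate_succ_apply', h1.1]] at h2
      · rw [map_zero]
    | Z f =>
      rw [Module.End.mul_apply, act_single, actFun_inr_Z, smul_zero, map_zero]
  | source i =>
    rw [map_mul, rep_gA, rep_gE]
    apply op_ext
    intro b
    cases b with
    | E f =>
      rw [Module.End.mul_apply, act_single, actFun_inl_E, one_smul]
      split_ifs with h1
      · rfl
      · rw [map_zero, act_single, actFun_inr_E, one_smul,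
          if_neg (fun hh => h1 hh.symm)]
    | P j ℓ =>
      rw [Module.End.mul_apply, act_single, actFun_inl_P, one_smul]
      split_ifs with h1
      · rfl
      · rw [map_zero, act_single, actFun_inr_P, one_smul,
          if_neg (fun hh => h1 (by rw [hh.1]))]
    | Z f =>
      rw [Module.End.mul_apply, act_single, actFun_inl_Z, one_smul]
      split_ifs with h1
      · rfl
      · rw [map_zero, act_single, actFun_inr_Z, smul_zero]
  | comp_zero i j he hne =>
    rw [map_mul, rep_gA, rep_gA, map_zero]
    apply op_ext
    intro b
    cases b with
    | E f =>
      rw [Module.End.mul_apply, LinearMap.zero_apply, act_single, actFun_inr_E, one_smul]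
      split_ifs with h1
      · exact aop_vout_zero k Sg n (by rw [Function.iterate_one]; exact hne)
      · rw [map_zero]
    | P j' ℓ =>
      rw [Module.End.mul_apply, LinearMap.zero_apply, act_single, actFun_inr_P, one_smul]
      split_ifs with h1
      · refine aop_vout_zero k Sg n ?_
        rw [Function.iterate_succ_apply', h1.1]
        exact hne
      · rw [map_zero]
    | Z f =>
      rw [Module.End.mul_apply, LinearMap.zero_apply, act_single, actFun_inr_Z,
        smul_zero, map_zero]
  | cycle i =>
    rw [map_smul, rep_cyc, rep_cyc]
    apply op_ext
    intro b
    rw [LinearMap.smul_apply]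
    cases b with
    | E f =>
      rw [cycop_E k Sg n hn hdvd, cycop_E k Sg n hn hdvd, edgeOf_τ]
      by_cases hf : Sg.edgeOf i = f
      · rw [if_pos hf, if_pos hf, sgn_τ, smul_smul]
        congr 1
        have hodd1 : (-1 : k) ^ (n - 1) = -1 :=
          Odd.neg_one_pow (Nat.Even.sub_odd (by omega) heven odd_one)
        rw [hodd1]
        ring
      · rw [if_neg hf, if_neg hf, smul_zero]
    | P j ℓ =>
      rw [cycop_P k Sg n hn hdvd, cycop_P k Sg n hn hdvd, smul_zero]
    | Z f =>
      rw [cycop_Z k Sg n hn hdvd, cycop_Z k Sg n hn hdvd, smul_zero]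

/-- The representation of the graded Brauer graph algebra. -/
noncomputable def repBGA (hn : 0 < n) (hdvd : ∀ v : Sg.V, Sg.deg v ∣ n) (heven : Even n) :
    BGA k Sg n →ₐ[k] Module.End k (Rmod k Sg) :=
  RingQuot.liftAlgHom k ⟨rep k Sg n, repRel k Sg n hn hdvd heven⟩

lemma repBGA_mk (hn : 0 < n) (hdvd : ∀ v : Sg.V, Sg.deg v ∣ n) (heven : Even n)
    (x : FA k Sg) :
    repBGA k Sg n hn hdvd heven (mkBGA k Sg n x) = rep k Sg n x :=
  RingQuot.liftAlgHom_mkAlgHom_apply k (rep k Sg n) (repRel k Sg n hn hdvd heven) x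

lemma mk_cyc_ne_zero (hn : 0 < n) (hdvd : ∀ v : Sg.V, Sg.deg v ∣ n) (heven : Even n)
    (i : Sg.H) : mkBGA k Sg n (cyc k Sg n i) ≠ 0 := by
  intro h0
  have h1 := congrArg (repBGA k Sg n hn hdvd heven) h0
  rw [repBGA_mk, map_zero, rep_cyc] at h1
  have h2 := congrArg
    (fun L : Module.End k (Rmod k Sg) => L (Finsupp.single (Bas.E (Sg.edgeOf i)) 1)) h1
  simp only [LinearMap.zero_apply] at h2
  rw [cycop_E k Sg n hn hdvd i (Sg.edgeOf i), if_pos rfl] at h2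
  rcases smul_eq_zero.mp h2 with h | h
  · exact sgn_ne_zero k Sg i h
  · exact one_ne_zero (Finsupp.single_eq_zero.mp h)

end RepRel

/-! ### Homogeneous components and path decompositions in the free algebra -/

section Comp

variable (k : Type) [Field k] (Sg : SGraph) (n : ℕ)

lemma prod_mem_FAcomp (l : List (Sg.Edge ⊕ Sg.H)) :
    (l.map (FreeAlgebra.ι k)).prod ∈ FAcomp k Sg ((l.map (wt Sg)).sum) :=
  Submodule.subset_span ⟨l, rfl, rfl⟩

lemma FAcomp_mul {p q : ℕ} {x y : FA k Sg}
    (hx : x ∈ FAcomp k Sg p) (hy : y ∈ FAcomp k Sg q) :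
    x * y ∈ FAcomp k Sg (p + q) := by
  have hle : FAcomp k Sg p * FAcomp k Sg q ≤ FAcomp k Sg (p + q) := by
    rw [FAcomp, FAcomp, Submodule.span_mul_span]
    apply Submodule.span_le.mpr
    rintro z ⟨a, ⟨la, hla, rfl⟩, b, ⟨lb, hlb, rfl⟩, rfl⟩
    exact Submodule.subset_span ⟨la ++ lb,
      by rw [List.map_append, List.sum_append, hla, hlb],
      by rw [List.map_append, List.prod_append]⟩
  exact hle (Submodule.mul_mem_mul hx hy)

lemma one_mem_FAcomp : (1 : FA k Sg) ∈ FAcomp k Sg 0 := by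
  have h := prod_mem_FAcomp k Sg ([] : List (Sg.Edge ⊕ Sg.H))
  simpa using h

lemma FAcomp_pow {p : ℕ} {x : FA k Sg} (hx : x ∈ FAcomp k Sg p) (m : ℕ) :
    x ^ m ∈ FAcomp k Sg (p * m) := by
  induction m with
  | zero => simpa using one_mem_FAcomp k Sg
  | succ m ih =>
    rw [pow_succ, Nat.mul_succ]
    exact FAcomp_mul k Sg ih hx

lemma gA_mem (j : Sg.H) : gA k Sg j ∈ FAcomp k Sg (Sg.d j) := by
  have h := prod_mem_FAcomp k Sg [Sum.inr j]
  simpa [wt, gA] using h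

lemma list_range_sum (f : ℕ → ℕ) (t : ℕ) :
    ((List.range t).map f).sum = ∑ m ∈ Finset.range t, f m := by
  induction t with
  | zero => simp
  | succ t ih =>
    rw [List.range_succ, Finset.sum_range_succ, List.map_append, List.sum_append, ih]
    simp

/-- The list of the arrow generators of the first `t` steps of the loop based at `j`. -/
noncomputable def gList (j : Sg.H) (t : ℕ) : List (FA k Sg) :=
  (List.range t).reverse.map fun m => gA k Sg (Sg.succ^[m] j)

lemma gList_zero (j : Sg.H) : gList k Sg j 0 = [] := rfl

lemma gList_succ (j : Sg.H) (t : ℕ) :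
    gList k Sg j (t + 1) = gA k Sg (Sg.succ^[t] j) :: gList k Sg j t := by
  unfold gList
  rw [List.range_succ, List.reverse_append]
  simp

lemma gList_split (j : Sg.H) (t : ℕ) :
    gList k Sg j (t + 1) = gList k Sg (Sg.succ j) t ++ [gA k Sg j] := by
  induction t with
  | zero => simp [gList_succ, gList_zero]
  | succ t ih =>
    rw [gList_succ, ih, gList_succ]
    rw [show Sg.succ^[t + 1] j = Sg.succ^[t] (Sg.succ j) from Function.iterate_succ_apply _ _ _]
    rfl

lemma loopOnce_eq (j : Sg.H) :
    loopOnce k Sg j = (gList k Sg j (Sg.val (Sg.vtx j))).prod := rfl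

lemma gList_prod_mem (j : Sg.H) (t : ℕ) :
    (gList k Sg j t).prod ∈ FAcomp k Sg (∑ m ∈ Finset.range t, Sg.d (Sg.succ^[m] j)) := by
  have h := prod_mem_FAcomp k Sg
    ((List.range t).reverse.map fun m => (Sum.inr (Sg.succ^[m] j) : Sg.Edge ⊕ Sg.H))
  have e1 : (((List.range t).reverse.map
        fun m => (Sum.inr (Sg.succ^[m] j) : Sg.Edge ⊕ Sg.H)).map (FreeAlgebra.ι k))
      = gList k Sg j t := by
    rw [List.map_map]; rfl
  have e2 : (((List.range t).reverse.map
        fun m => (Sum.inr (Sg.succ^[m] j) : Sg.Edge ⊕ Sg.H)).map (wt Sg)).sum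
      = ∑ m ∈ Finset.range t, Sg.d (Sg.succ^[m] j) := by
    rw [List.map_map, List.map_reverse, List.sum_reverse]
    exact list_range_sum _ t
  rw [e1, e2] at h
  exact h

lemma loopOnce_mem (j : Sg.H) : loopOnce k Sg j ∈ FAcomp k Sg (Sg.deg (Sg.vtx j)) := by
  have h := gList_prod_mem k Sg j (Sg.val (Sg.vtx j))
  rwa [sum_d_range_val, ← loopOnce_eq] at h

/-- The product of the arrows `a_{j-1} ⋯ a_{j+1}` (all arrows of the loop at the vertex
of `j` except `a_j`). -/
noncomputable def uElem (j : Sg.H) : FA k Sg :=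
  (gList k Sg (Sg.succ j) (Sg.val (Sg.vtx j) - 1)).prod

lemma loop_decomp (j : Sg.H) : loopOnce k Sg j = uElem k Sg j * gA k Sg j := by
  rw [loopOnce_eq,
    show Sg.val (Sg.vtx j) = (Sg.val (Sg.vtx j) - 1) + 1 from by
      have := val_pos Sg j; omega,
    gList_split, List.prod_append, List.prod_singleton]
  rfl

lemma loop_succ_decomp (j : Sg.H) :
    loopOnce k Sg (Sg.succ j) = gA k Sg j * uElem k Sg j := by
  rw [loopOnce_eq, Sg.vtx_succ,
    show Sg.val (Sg.vtx j) = (Sg.val (Sg.vtx j) - 1) + 1 from by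
      have := val_pos Sg j; omega,
    gList_succ, List.prod_cons,
    show Sg.succ^[Sg.val (Sg.vtx j) - 1] (Sg.succ j) = j from by
      rw [← Function.iterate_succ_apply, Nat.succ_eq_add_one,
        show Sg.val (Sg.vtx j) - 1 + 1 = Sg.val (Sg.vtx j) from by
          have := val_pos Sg j; omega,
        succ_iterate_val]]
  rfl

lemma uElem_mem (j : Sg.H) :
    uElem k Sg j ∈ FAcomp k Sg (Sg.deg (Sg.vtx j) - Sg.d j) := by
  have h := gList_prod_mem k Sg (Sg.succ j) (Sg.val (Sg.vtx j) - 1)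
  have e : ∑ m ∈ Finset.range (Sg.val (Sg.vtx j) - 1), Sg.d (Sg.succ^[m] (Sg.succ j))
      = Sg.deg (Sg.vtx j) - Sg.d j := by
    have h2 := sum_d_range_val Sg j
    rw [show Sg.val (Sg.vtx j) = (Sg.val (Sg.vtx j) - 1) + 1 from by
        have := val_pos Sg j; omega,
      Finset.sum_range_succ'] at h2
    have e3 : ∀ m, Sg.d (Sg.succ^[m] (Sg.succ j)) = Sg.d (Sg.succ^[m + 1] j) := fun m => by
      rw [← Function.iterate_succ_apply]
    simp only [e3]
    simp only [Function.iterate_zero_apply] at h2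
    omega
  rw [e] at h
  exact h

lemma pow_mul_swap (x y : FA k Sg) (m : ℕ) : (x * y) ^ (m + 1) = x * ((y * x) ^ m * y) := by
  induction m with
  | zero => simp
  | succ m ih =>
    rw [pow_succ, ih, pow_succ]
    simp only [mul_assoc]

/-- The complement `b_j` of the arrow `a_j` in the cycle `c_j`. -/
noncomputable def bElem (j : Sg.H) : FA k Sg :=
  loopOnce k Sg j ^ (n / Sg.deg (Sg.vtx j) - 1) * uElem k Sg j

lemma cyc_decomp_right (j : Sg.H) (hr : 1 ≤ n / Sg.deg (Sg.vtx j)) :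
    cyc k Sg n j = bElem k Sg n j * gA k Sg j := by
  conv_rhs => rw [bElem, mul_assoc, ← loop_decomp]
  unfold cyc
  rw [← pow_succ, show n / Sg.deg (Sg.vtx j) - 1 + 1 = n / Sg.deg (Sg.vtx j) from by omega]

lemma cyc_decomp_left (j : Sg.H) (hr : 1 ≤ n / Sg.deg (Sg.vtx j)) :
    cyc k Sg n (Sg.succ j) = gA k Sg j * bElem k Sg n j := by
  unfold cyc
  rw [Sg.vtx_succ, loop_succ_decomp,
    show n / Sg.deg (Sg.vtx j) = (n / Sg.deg (Sg.vtx j) - 1) + 1 from by omega,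
    pow_mul_swap, ← loop_decomp]
  rfl

lemma bElem_mem (j : Sg.H) (hn : 0 < n) (hdvd : Sg.deg (Sg.vtx j) ∣ n) :
    bElem k Sg n j ∈ FAcomp k Sg (n - Sg.d j) := by
  have h1 := FAcomp_pow k Sg (loopOnce_mem k Sg j) (n / Sg.deg (Sg.vtx j) - 1)
  have h2 := uElem_mem k Sg j
  have h3 := FAcomp_mul k Sg h1 h2
  have hd : Sg.d j ≤ Sg.deg (Sg.vtx j) := d_le_deg Sg j
  have hdeg : 0 < Sg.deg (Sg.vtx j) := deg_pos Sg j
  have hr : 1 ≤ n / Sg.deg (Sg.vtx j) :=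
    (Nat.one_le_div_iff hdeg).mpr (Nat.le_of_dvd hn hdvd)
  have hDn : Sg.deg (Sg.vtx j) * (n / Sg.deg (Sg.vtx j)) = n := Nat.mul_div_cancel' hdvd
  have harith : Sg.deg (Sg.vtx j) * (n / Sg.deg (Sg.vtx j) - 1) + (Sg.deg (Sg.vtx j) - Sg.d j)
      = n - Sg.d j := by
    obtain ⟨s, hs⟩ : ∃ s, n / Sg.deg (Sg.vtx j) = s + 1 :=
      ⟨n / Sg.deg (Sg.vtx j) - 1, by omega⟩
    rw [hs] at hDn
    rw [hs, Nat.add_sub_cancel]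
    rw [Nat.mul_succ] at hDn
    omega
  rw [harith] at h3
  exact h3

lemma cyc_mem (j : Sg.H) (hn : 0 < n) (hdvd : Sg.deg (Sg.vtx j) ∣ n) :
    cyc k Sg n j ∈ FAcomp k Sg n := by
  have h := FAcomp_pow k Sg (loopOnce_mem k Sg j) (n / Sg.deg (Sg.vtx j))
  rw [Nat.mul_div_cancel' hdvd] at h
  exact h

end Comp

/-! ### Computations in the graded Brauer graph algebra -/

section MkLemmas

variable (k : Type) [Field k] (Sg : SGraph) (n : ℕ)

attribute [local instance] Classical.propDecidable

lemma mkBGA_rel {x y : FA k Sg} (h : Rel k Sg n x y) :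
    mkBGA k Sg n x = mkBGA k Sg n y :=
  RingQuot.mkAlgHom_rel k h

lemma mk_gE_mul_gE_ne {f g : Sg.Edge} (h : f ≠ g) :
    mkBGA k Sg n (gE k Sg f) * mkBGA k Sg n (gE k Sg g) = 0 := by
  rw [← map_mul, mkBGA_rel k Sg n (Rel.orth f g h), map_zero]

lemma mk_gA_gE (i : Sg.H) :
    mkBGA k Sg n (gA k Sg i) * mkBGA k Sg n (gE k Sg (Sg.edgeOf i)) = mkBGA k Sg n (gA k Sg i) := by
  rw [← map_mul, mkBGA_rel k Sg n (Rel.source i)]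

lemma mk_gE_gA (i : Sg.H) :
    mkBGA k Sg n (gE k Sg (Sg.edgeOf (Sg.succ i))) * mkBGA k Sg n (gA k Sg i)
      = mkBGA k Sg n (gA k Sg i) := by
  rw [← map_mul, mkBGA_rel k Sg n (Rel.target i)]

lemma mk_gA_mul_gA_zero {i j : Sg.H} (hij : Sg.succ i ≠ j) :
    mkBGA k Sg n (gA k Sg j) * mkBGA k Sg n (gA k Sg i) = 0 := by
  by_cases he : Sg.edgeOf (Sg.succ i) = Sg.edgeOf j
  · rw [← map_mul, mkBGA_rel k Sg n (Rel.comp_zero i j he hij), map_zero]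
  · calc mkBGA k Sg n (gA k Sg j) * mkBGA k Sg n (gA k Sg i)
        = (mkBGA k Sg n (gA k Sg j) * mkBGA k Sg n (gE k Sg (Sg.edgeOf j)))
            * (mkBGA k Sg n (gE k Sg (Sg.edgeOf (Sg.succ i))) * mkBGA k Sg n (gA k Sg i)) := by
          rw [mk_gA_gE, mk_gE_gA]
      _ = mkBGA k Sg n (gA k Sg j)
            * ((mkBGA k Sg n (gE k Sg (Sg.edgeOf j)) * mkBGA k Sg n (gE k Sg (Sg.edgeOf (Sg.succ i))))
            * mkBGA k Sg n (gA k Sg i)) := by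
          simp only [mul_assoc]
      _ = 0 := by
          rw [mk_gE_mul_gE_ne k Sg n (fun hc => he hc.symm), zero_mul, mul_zero]

lemma mk_cyc_mul_gE (j : Sg.H) (f : Sg.Edge) (hr : 1 ≤ n / Sg.deg (Sg.vtx j)) :
    mkBGA k Sg n (cyc k Sg n j) * mkBGA k Sg n (gE k Sg f)
      = if f = Sg.edgeOf j then mkBGA k Sg n (cyc k Sg n j) else 0 := by
  rw [cyc_decomp_right k Sg n j hr, map_mul]
  by_cases hf : f = Sg.edgeOf j
  · rw [if_pos hf, hf, mul_assoc, mk_gA_gE]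
  · rw [if_neg hf, mul_assoc]
    have h0 : mkBGA k Sg n (gA k Sg j) * mkBGA k Sg n (gE k Sg f) = 0 := by
      rw [← mk_gA_gE k Sg n j, mul_assoc,
        mk_gE_mul_gE_ne k Sg n (fun hc => hf hc.symm), mul_zero]
    rw [h0, mul_zero]

lemma mk_cyc_mul_gA (hn : 0 < n) (hdvd : ∀ v : Sg.V, Sg.deg v ∣ n) (j m : Sg.H) :
    mkBGA k Sg n (cyc k Sg n j) * mkBGA k Sg n (gA k Sg m) = 0 := by
  have hrr : ∀ i : Sg.H, 1 ≤ n / Sg.deg (Sg.vtx i) := fun i =>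
    (Nat.one_le_div_iff (deg_pos Sg i)).mpr (Nat.le_of_dvd hn (hdvd _))
  by_cases hc : Sg.succ m = j
  · have h1 : mkBGA k Sg n (cyc k Sg n j)
        = ((-1 : k) ^ (n - 1)) • mkBGA k Sg n (cyc k Sg n (Sg.τ j)) := by
      rw [mkBGA_rel k Sg n (Rel.cycle j), map_smul]
    rw [h1, smul_mul_assoc, cyc_decomp_right k Sg n (Sg.τ j) (hrr _), map_mul, mul_assoc,
      mk_gA_mul_gA_zero k Sg n
        (show Sg.succ m ≠ Sg.τ j from by rw [hc]; exact fun hh => Sg.τ_ne j hh.symm),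
      mul_zero, smul_zero]
  · rw [cyc_decomp_right k Sg n j (hrr _), map_mul, mul_assoc,
      mk_gA_mul_gA_zero k Sg n hc, mul_zero]

lemma absorb (hn : 0 < n) (hdvd : ∀ v : Sg.V, Sg.deg v ∣ n) (j : Sg.H)
    (l : List (Sg.Edge ⊕ Sg.H)) :
    mkBGA k Sg n (cyc k Sg n j) * mkBGA k Sg n ((l.map (FreeAlgebra.ι k)).prod)
      ∈ Submodule.span k {mkBGA k Sg n (cyc k Sg n j)} := by
  have hrr : 1 ≤ n / Sg.deg (Sg.vtx j) :=
    (Nat.one_le_div_iff (deg_pos Sg j)).mpr (Nat.le_of_dvd hn (hdvd _))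
  induction l with
  | nil => simpa using Submodule.mem_span_singleton_self _
  | cons x l ih =>
    rw [List.map_cons, List.prod_cons, map_mul, ← mul_assoc]
    cases x with
    | inl f =>
      have he : mkBGA k Sg n (FreeAlgebra.ι k (Sum.inl f : Sg.Edge ⊕ Sg.H))
          = mkBGA k Sg n (gE k Sg f) := rfl
      rw [he, mk_cyc_mul_gE k Sg n j f hrr]
      split_ifs
      · exact ih
      · rw [zero_mul]
        exact Submodule.zero_mem _
    | inr m =>
      have he : mkBGA k Sg n (FreeAlgebra.ι k (Sum.inr m : Sg.Edge ⊕ Sg.H))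
          = mkBGA k Sg n (gA k Sg m) := rfl
      rw [he, mk_cyc_mul_gA k Sg n hn hdvd j m, zero_mul]
      exact Submodule.zero_mem _

lemma absorb' (hn : 0 < n) (hdvd : ∀ v : Sg.V, Sg.deg v ∣ n) (j : Sg.H) {q : ℕ}
    {b : BGA k Sg n} (hb : b ∈ BGAcomp k Sg n q) :
    mkBGA k Sg n (cyc k Sg n j) * b ∈ Submodule.span k {mkBGA k Sg n (cyc k Sg n j)} := by
  obtain ⟨β, hβ, rfl⟩ := hb
  have hle : FAcomp k Sg q ≤ Submodule.comap
      ((LinearMap.mulLeft k (mkBGA k Sg n (cyc k Sg n j))).comp (mkBGA k Sg n).toLinearMap)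
      (Submodule.span k {mkBGA k Sg n (cyc k Sg n j)}) := by
    rw [FAcomp]
    apply Submodule.span_le.mpr
    rintro x ⟨l, hl, rfl⟩
    simpa using absorb k Sg n hn hdvd j l
  simpa using hle hβ

end MkLemmas

end SGraph

open SGraph

/-!
STATEMENT 4: Let k be a field with char(k) ≠ 2, Σ an S-graph all of whose vertices are
internal, and n a positive even integer compatible with Σ. If some vertex of Σ has odd
degree, then A(Σ,n) is not n-Calabi–Yau: there is no linear functional tr : A(Σ,n)^n → k
which is both symmetric and nondegenerate.
-/

theorem statement4 (k : Type) [Field k] (hchar : ringChar k ≠ 2)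
    (Sg : SGraph) (n : ℕ) (hn : 0 < n) (heven : Even n)
    (hcompat : ∀ v : Sg.V, Sg.deg v ∣ n)
    (hodd : ∃ v : Sg.V, Odd (Sg.deg v)) :
    ¬ ∃ tr : BGAcomp k Sg n n →ₗ[k] k,
      (∀ p q : ℕ, p + q = n →
        ∀ a ∈ BGAcomp k Sg n p, ∀ b ∈ BGAcomp k Sg n q,
        ∀ (hab : a * b ∈ BGAcomp k Sg n n) (hba : b * a ∈ BGAcomp k Sg n n),
          tr ⟨a * b, hab⟩ = (-1 : k) ^ (p * q) * tr ⟨b * a, hba⟩) ∧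
      (∀ (p : ℕ) (a : BGA k Sg n), a ∈ BGAcomp k Sg n p → a ≠ 0 →
        ∃ (q : ℕ) (b : BGA k Sg n), b ∈ BGAcomp k Sg n q ∧
          ∃ hab : a * b ∈ BGAcomp k Sg n n, tr ⟨a * b, hab⟩ ≠ 0) := by
  classical
  rintro ⟨tr, hsym, hnd⟩
  obtain ⟨v, hv⟩ := hodd
  -- the chosen halfedge at the odd-degree vertex
  have hvne : (Sg.halfedgesAt v).Nonempty := by
    by_contra hemp
    rw [Finset.not_nonempty_iff_eq_empty] at hemp
    have h0 : Sg.deg v = 0 := by rw [deg, hemp, Finset.sum_empty]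
    rw [h0] at hv
    simpa using hv
  obtain ⟨i0, hi0⟩ := hvne
  have hvtx0 : Sg.vtx i0 = v := mem_halfedgesAt.mp hi0
  have hmemcyc : ∀ j : Sg.H, mkBGA k Sg n (cyc k Sg n j) ∈ BGAcomp k Sg n n := fun j =>
    Submodule.mem_map_of_mem (cyc_mem k Sg n j hn (hcompat _))
  set Tv : Sg.H → k := fun j => tr ⟨mkBGA k Sg n (cyc k Sg n j), hmemcyc j⟩ with hTvdef
  -- the rotation identity for the trace of the cycles
  have hrot : ∀ j : Sg.H, Tv (Sg.succ j) = (-1 : k) ^ (Sg.d j) * Tv j := by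
    intro j
    have hdeg_pos : 0 < Sg.deg (Sg.vtx j) := deg_pos Sg j
    have hdle : Sg.d j ≤ Sg.deg (Sg.vtx j) := d_le_deg Sg j
    have hdegn : Sg.deg (Sg.vtx j) ≤ n := Nat.le_of_dvd hn (hcompat _)
    have hr : 1 ≤ n / Sg.deg (Sg.vtx j) := (Nat.one_le_div_iff hdeg_pos).mpr hdegn
    have ha : mkBGA k Sg n (gA k Sg j) ∈ BGAcomp k Sg n (Sg.d j) :=
      Submodule.mem_map_of_mem (gA_mem k Sg j)
    have hbm : mkBGA k Sg n (bElem k Sg n j) ∈ BGAcomp k Sg n (n - Sg.d j) :=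
      Submodule.mem_map_of_mem (bElem_mem k Sg n j hn (hcompat _))
    have habe : mkBGA k Sg n (gA k Sg j) * mkBGA k Sg n (bElem k Sg n j)
        = mkBGA k Sg n (cyc k Sg n (Sg.succ j)) := by
      rw [← map_mul, ← cyc_decomp_left k Sg n j hr]
    have hbae : mkBGA k Sg n (bElem k Sg n j) * mkBGA k Sg n (gA k Sg j)
        = mkBGA k Sg n (cyc k Sg n j) := by
      rw [← map_mul, ← cyc_decomp_right k Sg n j hr]
    have hab : mkBGA k Sg n (gA k Sg j) * mkBGA k Sg n (bElem k Sg n j)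
        ∈ BGAcomp k Sg n n := by rw [habe]; exact hmemcyc _
    have hba : mkBGA k Sg n (bElem k Sg n j) * mkBGA k Sg n (gA k Sg j)
        ∈ BGAcomp k Sg n n := by rw [hbae]; exact hmemcyc _
    have h := hsym (Sg.d j) (n - Sg.d j) (by omega) _ ha _ hbm hab hba
    have e1 : (⟨mkBGA k Sg n (gA k Sg j) * mkBGA k Sg n (bElem k Sg n j), hab⟩ :
        BGAcomp k Sg n n) = ⟨mkBGA k Sg n (cyc k Sg n (Sg.succ j)), hmemcyc _⟩ :=
      Subtype.ext habe
    have e2 : (⟨mkBGA k Sg n (bElem k Sg n j) * mkBGA k Sg n (gA k Sg j), hba⟩ :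
        BGAcomp k Sg n n) = ⟨mkBGA k Sg n (cyc k Sg n j), hmemcyc j⟩ :=
      Subtype.ext hbae
    rw [e1, e2] at h
    have hsgn : ((-1 : k)) ^ (Sg.d j * (n - Sg.d j)) = (-1 : k) ^ (Sg.d j) := by
      rcases Nat.even_or_odd (Sg.d j) with he | ho
      · rw [Even.neg_one_pow (he.mul_right _), Even.neg_one_pow he]
      · rw [Odd.neg_one_pow (ho.mul (Nat.Even.sub_odd (by omega) heven ho)),
          Odd.neg_one_pow ho]
    rw [hsgn] at h
    exact h
  -- iterating the rotation identity around the odd vertex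
  have hiter : ∀ m : ℕ, Tv (Sg.succ^[m] i0)
      = (-1 : k) ^ (∑ l ∈ Finset.range m, Sg.d (Sg.succ^[l] i0)) * Tv i0 := by
    intro m
    induction m with
    | zero => simp
    | succ m ih =>
      rw [Function.iterate_succ_apply', hrot, ih, Finset.sum_range_succ, pow_add]
      ring
  have hT0 : Tv i0 = 0 := by
    have h1 := hiter (Sg.val (Sg.vtx i0))
    rw [succ_iterate_val, sum_d_range_val, hvtx0, Odd.neg_one_pow hv] at h1
    have h2 : (2 : k) * Tv i0 = 0 := by
      rw [two_mul]
      nth_rewrite 1 [h1]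
      ring
    rcases mul_eq_zero.mp h2 with h | h
    · exact absurd h (Ring.two_ne_zero hchar)
    · exact h
  -- nondegeneracy gives a nonzero trace of the cycle
  have hnz := mk_cyc_ne_zero k Sg n hn hcompat heven i0
  obtain ⟨q, b, hbq, hab, htr⟩ := hnd n _ (hmemcyc i0) hnz
  have hsp := absorb' k Sg n hn hcompat i0 hbq
  obtain ⟨μ, hμ⟩ := Submodule.mem_span_singleton.mp hsp
  have he : (⟨mkBGA k Sg n (cyc k Sg n i0) * b, hab⟩ : BGAcomp k Sg n n)
      = μ • ⟨mkBGA k Sg n (cyc k Sg n i0), hmemcyc i0⟩ := Subtype.ext hμ.symm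
  rw [he, map_smul] at htr
  have hTT : tr ⟨mkBGA k Sg n (cyc k Sg n i0), hmemcyc i0⟩ = Tv i0 := rfl
  rw [hTT, hT0, smul_zero] at htr
  exact htr rfl
end

section
/- Let H be an abelian category which is a length category and let S be a simple object of H. Then the pair (⊥S, ⟨S⟩) is a torsion pair in H, where ⊥S = {N ∈ H : Hom(N,S) = 0}: that is, Hom(N,T) = 0 for every N ∈ ⊥S and every T ∈ ⟨S⟩, and every object M of H fits into a short exact sequence 0 → N → M → T → 0 with N ∈ ⊥S and T ∈ ⟨S⟩. -/
/-!
STATEMENT 6: Let H be an abelian category which is a length category and let S be a simple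
object of H. Then the pair (⊥S, ⟨S⟩) is a torsion pair in H, where ⊥S = {N : Hom(N,S) = 0}:
Hom(N,T) = 0 for every N ∈ ⊥S and T ∈ ⟨S⟩, and every object M fits into a short exact
sequence 0 → N → M → T → 0 with N ∈ ⊥S and T ∈ ⟨S⟩.
-/

open CategoryTheory CategoryTheory.Limits

universe v u

variable {C : Type u} [Category.{v} C] [Abelian C]

namespace Statement6Aux

open CategoryTheory.Abelian

attribute [local instance] CategoryTheory.Abelian.Pseudoelement.objectToSort
  CategoryTheory.Abelian.Pseudoelement.homToFun

section

variable (S : C)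

/-- `⊥S` is closed under extensions. -/
lemma bot_ext {N M Q : C} (f : N ⟶ M) (g : M ⟶ Q) (w : f ≫ g = 0)
    (hse : (ShortComplex.mk f g w).ShortExact)
    (hN : ∀ φ : N ⟶ S, φ = 0) (hQ : ∀ φ : Q ⟶ S, φ = 0) :
    ∀ φ : M ⟶ S, φ = 0 := by
  intro φ
  haveI : Epi g := hse.epi_g
  have h0 : (ShortComplex.mk f g w).f ≫ φ = 0 := hN (f ≫ φ)
  have hd := hse.exact.g_desc φ h0
  rw [← hd, hQ (hse.exact.desc φ h0), comp_zero]

/-- The short exact sequence `A ↪ B ↠ coker`. -/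
lemma ses_mono {A B : C} (u : A ⟶ B) [Mono u] :
    (ShortComplex.mk u (cokernel.π u) (cokernel.condition u)).ShortExact :=
  ShortComplex.ShortExact.mk' (ShortComplex.exact_cokernel u) inferInstance inferInstance

/-- The short exact sequence `ker ↪ A ↠ B`. -/
lemma ses_epi {A B : C} (p : A ⟶ B) [Epi p] :
    (ShortComplex.mk (kernel.ι p) p (kernel.condition p)).ShortExact :=
  ShortComplex.ShortExact.mk' (ShortComplex.exact_kernel p) inferInstance inferInstance

/-- The statement that `M` admits a torsion decomposition w.r.t. `S`. -/
def Decomp (M : C) : Prop :=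
  ∃ (N T : C) (f : N ⟶ M) (g : M ⟶ T) (w : f ≫ g = 0),
    (ShortComplex.mk f g w).ShortExact ∧ (∀ φ : N ⟶ S, φ = 0) ∧ SClosure S T

lemma isZero_cokernel_id (M : C) : IsZero (cokernel (𝟙 M)) := by
  have hπ : cokernel.π (𝟙 M) = 0 := by
    rw [← Category.id_comp (cokernel.π (𝟙 M))]
    exact cokernel.condition _
  rw [IsZero.iff_id_eq_zero, ← cancel_epi (cokernel.π (𝟙 M)), hπ]
  simp

lemma decomp_of_bot {M : C} (hM : ∀ φ : M ⟶ S, φ = 0) : Decomp S M :=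
  ⟨M, cokernel (𝟙 M), 𝟙 M, cokernel.π (𝟙 M), cokernel.condition _, ses_mono _, hM,
    SClosure.of_isZero _ (isZero_cokernel_id M)⟩

end

/-- Noether lemma I: given `N ↪ X ↠ T` and `X ↪ M ↠ Z` short exact, the quotient
`W = M/N` sits in a short exact sequence `T ↪ W ↠ Z`. -/
lemma noether₁ {N X T M Z : C} (f : N ⟶ X) (g : X ⟶ T) (w₁ : f ≫ g = 0)
    (h₁ : (ShortComplex.mk f g w₁).ShortExact)
    (i : X ⟶ M) (q : M ⟶ Z) (w₂ : i ≫ q = 0) (h₂ : (ShortComplex.mk i q w₂).ShortExact) :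
    ∃ (j : T ⟶ cokernel (f ≫ i)) (z : cokernel (f ≫ i) ⟶ Z) (w : j ≫ z = 0),
      (ShortComplex.mk j z w).ShortExact ∧ g ≫ j = i ≫ cokernel.π (f ≫ i) ∧
        cokernel.π (f ≫ i) ≫ z = q := by
  haveI : Mono f := h₁.mono_f
  haveI : Epi g := h₁.epi_g
  haveI : Mono i := h₂.mono_f
  haveI : Epi q := h₂.epi_g
  haveI : Mono (f ≫ i) := mono_comp f i
  have hfiπ : (ShortComplex.mk f g w₁).f ≫ (i ≫ cokernel.π (f ≫ i)) = 0 := by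
    show f ≫ i ≫ cokernel.π (f ≫ i) = 0
    rw [← Category.assoc]; exact cokernel.condition _
  set j := h₁.exact.desc (i ≫ cokernel.π (f ≫ i)) hfiπ with hjdef
  have hgj : g ≫ j = i ≫ cokernel.π (f ≫ i) := h₁.exact.g_desc _ _
  have hzw : (f ≫ i) ≫ q = 0 := by rw [Category.assoc, w₂, comp_zero]
  set z := cokernel.desc (f ≫ i) q hzw with hzdef
  have hπz : cokernel.π (f ≫ i) ≫ z = q := cokernel.π_desc _ _ _
  have hw0 : j ≫ z = 0 := by
    rw [← cancel_epi g, comp_zero, ← Category.assoc, hgj, Category.assoc, hπz, w₂]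
  haveI : Epi z := epi_of_epi_fac hπz
  haveI : Mono j := by
    apply Pseudoelement.mono_of_zero_of_map_zero
    intro a ha
    obtain ⟨x, hx⟩ := Pseudoelement.pseudo_surjective_of_epi g a
    have h1 : cokernel.π (f ≫ i) (i x) = 0 := by
      rw [← Pseudoelement.comp_apply, ← hgj, Pseudoelement.comp_apply, hx, ha]
    obtain ⟨n, hn⟩ := Pseudoelement.pseudo_exact_of_exact
      (ShortComplex.exact_cokernel (f ≫ i)) (i x) h1
    rw [Pseudoelement.comp_apply] at hn
    have hfn : f n = x := Pseudoelement.pseudo_injective_of_mono i hn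
    rw [← hx, ← hfn, ← Pseudoelement.comp_apply, w₁]
    apply Pseudoelement.zero_apply
  have hexact : (ShortComplex.mk j z hw0).Exact := by
    apply Pseudoelement.exact_of_pseudo_exact
    intro b hb
    obtain ⟨m, hm⟩ := Pseudoelement.pseudo_surjective_of_epi (cokernel.π (f ≫ i)) b
    have hq : q m = 0 := by
      rw [← hπz, Pseudoelement.comp_apply, hm]; exact hb
    obtain ⟨x, hx⟩ := Pseudoelement.pseudo_exact_of_exact h₂.exact m hq
    refine ⟨g x, ?_⟩
    show j (g x) = b
    rw [← Pseudoelement.comp_apply, hgj, Pseudoelement.comp_apply, hx]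
    exact hm
  exact ⟨j, z, hw0, ShortComplex.ShortExact.mk' hexact inferInstance inferInstance, hgj, hπz⟩

/-- Noether lemma II: given `X ↪ M ↠ W` and `N₁ ↪ W ↠ T₁` short exact, the kernel
`K` of `M ↠ W ↠ T₁` sits in a short exact sequence `X ↪ K ↠ N₁`. -/
lemma noether₂ {X M W N₁ T₁ : C} (x : X ⟶ M) (π : M ⟶ W) (w₁ : x ≫ π = 0)
    (h₁ : (ShortComplex.mk x π w₁).ShortExact)
    (n₁ : N₁ ⟶ W) (p₁ : W ⟶ T₁) (w₂ : n₁ ≫ p₁ = 0)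
    (h₂ : (ShortComplex.mk n₁ p₁ w₂).ShortExact) :
    ∃ (u : X ⟶ kernel (π ≫ p₁)) (r : kernel (π ≫ p₁) ⟶ N₁) (w : u ≫ r = 0),
      (ShortComplex.mk u r w).ShortExact ∧ u ≫ kernel.ι (π ≫ p₁) = x ∧
        r ≫ n₁ = kernel.ι (π ≫ p₁) ≫ π := by
  haveI : Mono x := h₁.mono_f
  haveI : Epi π := h₁.epi_g
  haveI : Mono n₁ := h₂.mono_f
  haveI : Epi p₁ := h₂.epi_g
  have hx0 : x ≫ π ≫ p₁ = 0 := by rw [← Category.assoc, w₁, zero_comp]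
  set u := kernel.lift (π ≫ p₁) x hx0 with hudef
  have hu : u ≫ kernel.ι (π ≫ p₁) = x := kernel.lift_ι _ _ _
  have hιp : (kernel.ι (π ≫ p₁) ≫ π) ≫ (ShortComplex.mk n₁ p₁ w₂).g = 0 := by
    show (kernel.ι (π ≫ p₁) ≫ π) ≫ p₁ = 0
    rw [Category.assoc]; exact kernel.condition _
  set r := h₂.exact.lift (kernel.ι (π ≫ p₁) ≫ π) hιp with hrdef
  have hr : r ≫ n₁ = kernel.ι (π ≫ p₁) ≫ π := h₂.exact.lift_f _ _
  haveI : Mono u := mono_of_mono_fac hu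
  have hw0 : u ≫ r = 0 := by
    rw [← cancel_mono n₁, Category.assoc, hr, zero_comp, ← Category.assoc, hu, w₁]
  haveI : Epi r := by
    apply Pseudoelement.epi_of_pseudo_surjective
    intro b
    obtain ⟨m, hm⟩ := Pseudoelement.pseudo_surjective_of_epi π (n₁ b)
    have h0 : (π ≫ p₁) m = 0 := by
      rw [Pseudoelement.comp_apply, hm, ← Pseudoelement.comp_apply, w₂]
      apply Pseudoelement.zero_apply
    obtain ⟨a, ha⟩ := Pseudoelement.pseudo_exact_of_exact
      (ShortComplex.exact_kernel (π ≫ p₁)) m h0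
    refine ⟨a, Pseudoelement.pseudo_injective_of_mono n₁ ?_⟩
    show n₁ (r a) = n₁ b
    rw [← Pseudoelement.comp_apply, hr, Pseudoelement.comp_apply, ha]
    exact hm
  have hexact : (ShortComplex.mk u r hw0).Exact := by
    apply Pseudoelement.exact_of_pseudo_exact
    intro b hb
    have h0 : π (kernel.ι (π ≫ p₁) b) = 0 := by
      rw [← Pseudoelement.comp_apply, ← hr, Pseudoelement.comp_apply]
      show n₁ (r b) = 0
      rw [hb, Pseudoelement.apply_zero]
    obtain ⟨a, ha⟩ := Pseudoelement.pseudo_exact_of_exact h₁.exact (kernel.ι (π ≫ p₁) b) h0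
    refine ⟨a, Pseudoelement.pseudo_injective_of_mono (kernel.ι (π ≫ p₁)) ?_⟩
    show kernel.ι (π ≫ p₁) (u a) = kernel.ι (π ≫ p₁) b
    rw [← Pseudoelement.comp_apply, hu]
    exact ha
  exact ⟨u, r, hw0, ShortComplex.ShortExact.mk' hexact inferInstance inferInstance, hu, hr⟩

/-- The flip lemma: if `T ↪ M ↠ Z` is short exact with `T ∈ ⟨S⟩` and `Hom(Z,S) = 0`,
then `M` admits a torsion decomposition. -/
lemma flip (S : C) [Simple S] {T : C} (hT : SClosure S T) :
    ∀ {M Z : C} (i : T ⟶ M) (q : M ⟶ Z) (w : i ≫ q = 0),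
      (ShortComplex.mk i q w).ShortExact → (∀ φ : Z ⟶ S, φ = 0) → Decomp S M := by
  induction hT with
  | of_isZero T h0 =>
    intro M Z i q w hse hZ
    exact decomp_of_bot S (bot_ext S i q w hse (fun φ => h0.eq_zero_of_src φ) hZ)
  | of_iso T he =>
    intro M Z i q w hse hZ
    obtain ⟨e⟩ := he
    haveI : Mono i := hse.mono_f
    haveI : Epi q := hse.epi_g
    by_cases hM : ∀ φ : M ⟶ S, φ = 0
    · exact decomp_of_bot S hM
    · push_neg at hM
      obtain ⟨φ, hφ⟩ := hM
      have hiφ : i ≫ φ ≠ 0 := by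
        intro h
        apply hφ
        have hd := hse.exact.g_desc φ h
        rw [← hd, hZ (hse.exact.desc φ h), comp_zero]
      have hψ' : e.inv ≫ i ≫ φ ≠ 0 := by
        intro h
        apply hiφ
        rw [← Category.id_comp (i ≫ φ), ← e.hom_inv_id, Category.assoc, h, comp_zero]
      haveI : Epi (e.inv ≫ i ≫ φ) := epi_of_nonzero_to_simple hψ'
      haveI : IsIso (e.inv ≫ i ≫ φ) := isIso_of_epi_of_nonzero hψ'
      have heq : i ≫ φ = e.hom ≫ (e.inv ≫ i ≫ φ) := by simp
      haveI : IsIso (i ≫ φ) := by rw [heq]; infer_instance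
      haveI : Epi (i ≫ φ) := inferInstance
      haveI : Epi φ := epi_of_epi i φ
      haveI : Mono (kernel.ι φ ≫ q) := by
        apply Pseudoelement.mono_of_zero_of_map_zero
        intro a ha
        rw [Pseudoelement.comp_apply] at ha
        obtain ⟨t, ht⟩ := Pseudoelement.pseudo_exact_of_exact hse.exact (kernel.ι φ a) ha
        have hta : (i ≫ φ) t = 0 := by
          rw [Pseudoelement.comp_apply, ht, ← Pseudoelement.comp_apply, kernel.condition]
          apply Pseudoelement.zero_apply
        have ht0 : t = 0 :=
          Pseudoelement.zero_of_map_zero _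
            (Pseudoelement.pseudo_injective_of_mono (i ≫ φ)) _ hta
        apply Pseudoelement.zero_of_map_zero _
          (Pseudoelement.pseudo_injective_of_mono (kernel.ι φ))
        rw [← ht, ht0, Pseudoelement.apply_zero]
      haveI : Epi (kernel.ι φ ≫ q) := by
        apply Preadditive.epi_of_cancel_zero
        intro A c hc
        have h1 : (ShortComplex.mk (kernel.ι φ) φ (kernel.condition φ)).f ≫ (q ≫ c) = 0 := by
          show kernel.ι φ ≫ q ≫ c = 0
          rw [← Category.assoc, hc]
        have hd : φ ≫ (ses_epi φ).exact.desc (q ≫ c) h1 = q ≫ c :=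
          (ses_epi φ).exact.g_desc _ _
        have h2 : (i ≫ φ) ≫ (ses_epi φ).exact.desc (q ≫ c) h1 = 0 := by
          rw [Category.assoc, hd, ← Category.assoc, w, zero_comp]
        have hd0 : (ses_epi φ).exact.desc (q ≫ c) h1 = 0 := by
          apply (cancel_epi (i ≫ φ)).1
          rw [comp_zero]; exact h2
        have hqc : q ≫ c = 0 := by rw [← hd, hd0, comp_zero]
        apply (cancel_epi q).1
        rw [comp_zero]; exact hqc
      haveI : IsIso (kernel.ι φ ≫ q) := isIso_of_mono_of_epi _
      have hbot : ∀ α : kernel φ ⟶ S, α = 0 := by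
        intro α
        have hα : α = (kernel.ι φ ≫ q) ≫ (inv (kernel.ι φ ≫ q) ≫ α) := by simp
        rw [hα, hZ (inv (kernel.ι φ ≫ q) ≫ α), comp_zero]
      exact ⟨kernel φ, S, kernel.ι φ, φ, kernel.condition φ, ses_epi φ, hbot,
        SClosure.of_iso S ⟨Iso.refl S⟩⟩
  | of_extension f g w hse hX hZT ihX ihZT =>
    intro M Z i q w₂ hse₂ hZ
    haveI : Mono f := hse.mono_f
    haveI : Epi g := hse.epi_g
    haveI : Mono i := hse₂.mono_f
    haveI : Epi q := hse₂.epi_g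
    obtain ⟨j, z, wjz, hsejz, hgj, hπz⟩ := noether₁ f g w hse i q w₂ hse₂
    obtain ⟨N₁, T₁, n₁, p₁, wn₁, hse₁, hN₁, hT₁⟩ := ihZT j z wjz hsejz hZ
    haveI : Mono (f ≫ i) := mono_comp _ _
    obtain ⟨u, r, wur, hseur, hu, hr⟩ := noether₂ (f ≫ i) (cokernel.π (f ≫ i))
      (cokernel.condition _) (ses_mono _) n₁ p₁ wn₁ hse₁
    obtain ⟨N₂, T₂, n₂, p₂, wn₂, hseK, hN₂, hT₂⟩ := ihX u r wur hseur hN₁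
    haveI : Epi p₁ := hse₁.epi_g
    haveI : Epi (cokernel.π (f ≫ i) ≫ p₁) := epi_comp _ _
    haveI : Mono n₂ := hseK.mono_f
    haveI : Mono (n₂ ≫ kernel.ι (cokernel.π (f ≫ i) ≫ p₁)) := mono_comp _ _
    obtain ⟨j', z', wj', hsej', _, _⟩ := noether₁ n₂ p₂ wn₂ hseK
      (kernel.ι (cokernel.π (f ≫ i) ≫ p₁)) (cokernel.π (f ≫ i) ≫ p₁)
      (kernel.condition _) (ses_epi _)
    exact ⟨N₂, cokernel (n₂ ≫ kernel.ι (cokernel.π (f ≫ i) ≫ p₁)),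
      n₂ ≫ kernel.ι (cokernel.π (f ≫ i) ≫ p₁), cokernel.π _, cokernel.condition _,
      ses_mono _, hN₂, SClosure.of_extension j' z' wj' hsej' hT₂ hT₁⟩

/-- Every finite length object admits a torsion decomposition. -/
lemma decomp_all (S : C) [Simple S] {M : C} (h : FinLength M) : Decomp S M := by
  induction h with
  | of_isZero M h0 => exact decomp_of_bot S (fun φ => h0.eq_zero_of_src φ)
  | @of_extension X Y Z f g w hse hFL hsimp ih =>
    haveI : Mono f := hse.mono_f
    haveI : Epi g := hse.epi_g
    haveI := hsimp
    obtain ⟨N, T, n, p, wnp, hseT, hN, hT⟩ := ih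
    haveI : Mono n := hseT.mono_f
    obtain ⟨j, z, wjz, hsejz, hgj, hπz⟩ := noether₁ n p wnp hseT f g w hse
    by_cases hZS : ∀ φ : Z ⟶ S, φ = 0
    · obtain ⟨N₁, T₁, n₁, p₁, wn₁, hse₁, hN₁, hT₁⟩ := flip S hT j z wjz hsejz hZS
      haveI : Mono (n ≫ f) := mono_comp _ _
      obtain ⟨u, r, wur, hseur, hu, hr⟩ := noether₂ (n ≫ f) (cokernel.π (n ≫ f))
        (cokernel.condition _) (ses_mono _) n₁ p₁ wn₁ hse₁
      haveI : Epi p₁ := hse₁.epi_g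
      haveI : Epi (cokernel.π (n ≫ f) ≫ p₁) := epi_comp _ _
      exact ⟨kernel (cokernel.π (n ≫ f) ≫ p₁), T₁, kernel.ι _, cokernel.π (n ≫ f) ≫ p₁,
        kernel.condition _, ses_epi _, bot_ext S u r wur hseur hN hN₁, hT₁⟩
    · push_neg at hZS
      obtain ⟨φ, hφ⟩ := hZS
      haveI : Epi φ := epi_of_nonzero_to_simple hφ
      haveI : IsIso φ := isIso_of_epi_of_nonzero hφ
      haveI : Mono (n ≫ f) := mono_comp _ _
      exact ⟨N, cokernel (n ≫ f), n ≫ f, cokernel.π _, cokernel.condition _, ses_mono _, hN,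
        SClosure.of_extension j z wjz hsejz hT (SClosure.of_iso _ ⟨asIso φ⟩)⟩

/-- Part 1 of the torsion pair statement. -/
lemma part1 (S : C) {T : C} (hT : SClosure S T) :
    ∀ {N : C}, (∀ φ : N ⟶ S, φ = 0) → ∀ ψ : N ⟶ T, ψ = 0 := by
  induction hT with
  | of_isZero T h0 =>
    intro N hN ψ
    exact h0.eq_zero_of_tgt ψ
  | of_iso T he =>
    intro N hN ψ
    obtain ⟨e⟩ := he
    have h := hN (ψ ≫ e.hom)
    rw [← Category.comp_id ψ, ← e.hom_inv_id, ← Category.assoc, h, zero_comp]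
  | of_extension f g w hse h1 h2 ih1 ih2 =>
    intro N hN ψ
    haveI : Mono f := hse.mono_f
    have hg : ψ ≫ (ShortComplex.mk f g w).g = 0 := ih2 hN (ψ ≫ g)
    have hl := hse.exact.lift_f ψ hg
    rw [← hl, ih1 hN (hse.exact.lift ψ hg), zero_comp]

end Statement6Aux

theorem statement6 (hlen : ∀ X : C, FinLength X) (S : C) [Simple S] :
    (∀ N T : C, (∀ φ : N ⟶ S, φ = 0) → SClosure S T → ∀ ψ : N ⟶ T, ψ = 0) ∧
    (∀ M : C, ∃ (N T : C) (f : N ⟶ M) (g : M ⟶ T) (w : f ≫ g = 0),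
      (ShortComplex.mk f g w).ShortExact ∧ (∀ φ : N ⟶ S, φ = 0) ∧ SClosure S T) := by
  constructor
  · intro N T hN hT ψ
    exact Statement6Aux.part1 S hT hN ψ
  · intro M
    exact Statement6Aux.decomp_all S (hlen M)
end

section
/- Let H be an abelian category which is a length category and let S be a simple object of H. Then the pair (⟨S⟩, S⊥) is a torsion pair in H, where S⊥ = {N ∈ H : Hom(S,N) = 0}: that is, Hom(T,N) = 0 for every T ∈ ⟨S⟩ and every N ∈ S⊥, and every object M of H fits into a short exact sequence 0 → T → M → N → 0 with T ∈ ⟨S⟩ and N ∈ S⊥. -/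
/-!
STATEMENT 7: Let H be an abelian category which is a length category and let S be a simple
object of H. Then the pair (⟨S⟩, S⊥) is a torsion pair in H, where S⊥ = {N : Hom(S,N) = 0}:
Hom(T,N) = 0 for every T ∈ ⟨S⟩ and N ∈ S⊥, and every object M fits into a short exact
sequence 0 → T → M → N → 0 with T ∈ ⟨S⟩ and N ∈ S⊥.
-/

open CategoryTheory CategoryTheory.Limits CategoryTheory.Abelian

attribute [local instance] Pseudoelement.objectToSort Pseudoelement.homToFun

universe v u

variable {C : Type u} [Category.{v} C] [Abelian C]

lemma myShortExact_of_mono {A B : C} (f : A ⟶ B) [Mono f] :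
    (ShortComplex.mk f (cokernel.π f) (cokernel.condition f)).ShortExact where
  exact := ShortComplex.exact_of_g_is_cokernel _ (cokernelIsCokernel f)

lemma myShortExact_of_epi {A B : C} (g : A ⟶ B) [Epi g] :
    (ShortComplex.mk (kernel.ι g) g (kernel.condition g)).ShortExact where
  exact := ShortComplex.exact_of_f_is_kernel _ (kernelIsKernel g)

lemma step (S : C) [Simple S] {X M Z : C} (i : X ⟶ M) (p : M ⟶ Z) (wip : i ≫ p = 0)
    (hse : (ShortComplex.mk i p wip).ShortExact) (hZ : Simple Z)
    {TX NX : C} (fX : TX ⟶ X) (gX : X ⟶ NX) (wX : fX ≫ gX = 0)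
    (hseX : (ShortComplex.mk fX gX wX).ShortExact) (hTX : SClosure S TX)
    (hNX : ∀ φ : S ⟶ NX, φ = 0) :
    ∃ (T N : C) (f : T ⟶ M) (g : M ⟶ N) (w : f ≫ g = 0),
      (ShortComplex.mk f g w).ShortExact ∧ SClosure S T ∧ (∀ φ : S ⟶ N, φ = 0) := by
  haveI := hZ
  haveI : Mono i := hse.mono_f
  haveI : Epi p := hse.epi_g
  haveI : Mono fX := hseX.mono_f
  haveI : Epi gX := hseX.epi_g
  set j : TX ⟶ M := fX ≫ i with hj
  haveI : Mono j := mono_comp _ _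
  set π : M ⟶ cokernel j := cokernel.π j with hπ
  have hseJ : (ShortComplex.mk j π (cokernel.condition j)).ShortExact := myShortExact_of_mono j
  -- the induced map q̄ : cokernel j ⟶ Z
  have hjp : j ≫ p = 0 := by rw [hj, Category.assoc, wip, comp_zero]
  set q : cokernel j ⟶ Z := cokernel.desc j p hjp with hq
  have hπq : π ≫ q = p := cokernel.π_desc j p hjp
  -- the induced map ī : NX ⟶ cokernel j
  have hfXiπ : fX ≫ (i ≫ π) = 0 := by
    rw [← Category.assoc, ← hj, cokernel.condition]
  obtain ⟨ib, hib0⟩ := CokernelCofork.IsColimit.desc' hseX.gIsCokernel (i ≫ π) hfXiπ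
  have hib : gX ≫ ib = i ≫ π := hib0
  have wib : ib ≫ q = 0 := by
    rw [← cancel_epi gX, ← Category.assoc, hib, Category.assoc, hπq, wip, comp_zero]
  have hseM' : (ShortComplex.mk ib q wib).ShortExact := by
    have hmono : Mono ib := by
      apply Pseudoelement.mono_of_zero_of_map_zero
      intro n hn
      obtain ⟨x, hx⟩ := Pseudoelement.pseudo_surjective_of_epi gX n
      have h1 : π (i x) = 0 := by
        rw [← Pseudoelement.comp_apply, ← hib, Pseudoelement.comp_apply, hx, hn]
      obtain ⟨t, ht⟩ := Pseudoelement.pseudo_exact_of_exact hseJ.exact (i x) h1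
      have h2 : i (fX t) = i x := by
        rw [← Pseudoelement.comp_apply]; exact ht
      have h3 : fX t = x := Pseudoelement.pseudo_injective_of_mono i h2
      rw [← hx, ← h3, ← Pseudoelement.comp_apply, wX, Pseudoelement.zero_apply]
    have hepi : Epi q := by
      have : Epi (π ≫ q) := by rw [hπq]; infer_instance
      exact epi_of_epi π q
    have hexact : (ShortComplex.mk ib q wib).Exact := by
      apply Pseudoelement.exact_of_pseudo_exact
      intro m' hm'
      obtain ⟨m, hm⟩ := Pseudoelement.pseudo_surjective_of_epi π m'
      have h1 : p m = 0 := by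
        rw [← hπq, Pseudoelement.comp_apply, hm, hm']
      obtain ⟨x, hx⟩ := Pseudoelement.pseudo_exact_of_exact hse.exact m h1
      refine ⟨gX x, ?_⟩
      show ib (gX x) = m'
      rw [← Pseudoelement.comp_apply, hib, Pseudoelement.comp_apply, hx, hm]
    exact { exact := hexact, mono_f := hmono, epi_g := hepi }
  haveI : Mono ib := hseM'.mono_f
  by_cases hM' : ∀ φ : S ⟶ cokernel j, φ = 0
  · exact ⟨TX, cokernel j, j, π, cokernel.condition j, hseJ, hTX, hM'⟩
  · push_neg at hM'
    obtain ⟨φ, hφ⟩ := hM'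
    have hφq : φ ≫ q ≠ 0 := by
      intro h0
      apply hφ
      have : hseM'.exact.lift φ h0 ≫ ib = φ := hseM'.exact.lift_f φ h0
      rw [← this, hNX (hseM'.exact.lift φ h0), zero_comp]
    haveI : IsIso (φ ≫ q) := isIso_of_hom_simple hφq
    set s : Z ⟶ cokernel j := inv (φ ≫ q) ≫ φ with hs
    have hsq : s ≫ q = 𝟙 Z := by rw [hs, Category.assoc, IsIso.inv_hom_id]
    set sp := ShortComplex.Splitting.ofExactOfSection _ hseM'.exact s hsq hseM'.mono_f with hsp
    set r : cokernel j ⟶ NX := sp.r with hr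
    have hibr : ib ≫ r = 𝟙 NX := sp.f_r
    haveI : Epi r := by
      have : IsSplitEpi r := ⟨⟨⟨ib, hibr⟩⟩⟩
      infer_instance
    set gM : M ⟶ NX := π ≫ r with hgM
    haveI : Epi gM := epi_comp _ _
    have hjgM : j ≫ gM = 0 := by
      rw [hgM, ← Category.assoc, cokernel.condition, zero_comp]
    set u : TX ⟶ kernel gM := kernel.lift gM j hjgM with hu
    have huι : u ≫ kernel.ι gM = j := kernel.lift_ι gM j hjgM
    set v : kernel gM ⟶ Z := kernel.ι gM ≫ p with hv
    have wuv : u ≫ v = 0 := by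
      rw [hv, ← Category.assoc, huι, hjp]
    -- key identity : i ≫ gM = gX
    have higM : i ≫ gM = gX := by
      rw [hgM, ← Category.assoc]
      rw [← hib, Category.assoc, hibr, Category.comp_id]
    have hseT : (ShortComplex.mk u v wuv).ShortExact := by
      have hmono : Mono u := by
        have : Mono (u ≫ kernel.ι gM) := by rw [huι]; infer_instance
        exact mono_of_mono u (kernel.ι gM)
      have hepi : Epi v := by
        apply Pseudoelement.epi_of_pseudo_surjective
        intro z
        obtain ⟨m, hm⟩ := Pseudoelement.pseudo_surjective_of_epi p z
        obtain ⟨x, hx⟩ := Pseudoelement.pseudo_surjective_of_epi gX (gM m)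
        have heq : gM m = gM (i x) := by
          rw [← Pseudoelement.comp_apply, higM, hx]
        obtain ⟨z', hz'0, hz'⟩ := Pseudoelement.sub_of_eq_image gM m (i x) heq
        have hpz' : p z' = p m := by
          apply hz'
          rw [← Pseudoelement.comp_apply, wip, Pseudoelement.zero_apply]
        obtain ⟨t, ht⟩ := Pseudoelement.pseudo_exact_of_exact
          (myShortExact_of_epi gM).exact z' hz'0
        refine ⟨t, ?_⟩
        show v t = z
        rw [hv, Pseudoelement.comp_apply, ht, hpz', hm]
      have hexact : (ShortComplex.mk u v wuv).Exact := by
        apply Pseudoelement.exact_of_pseudo_exact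
        intro t ht
        have h1 : p (kernel.ι gM t) = 0 := by
          rw [← Pseudoelement.comp_apply]; exact ht
        obtain ⟨x, hx⟩ := Pseudoelement.pseudo_exact_of_exact hse.exact (kernel.ι gM t) h1
        have h2 : gX x = 0 := by
          rw [← higM, Pseudoelement.comp_apply, hx, ← Pseudoelement.comp_apply,
            kernel.condition, Pseudoelement.zero_apply]
        obtain ⟨tx, htx⟩ := Pseudoelement.pseudo_exact_of_exact hseX.exact x h2
        refine ⟨tx, ?_⟩
        apply Pseudoelement.pseudo_injective_of_mono (kernel.ι gM)
        rw [← Pseudoelement.comp_apply, huι, hj, Pseudoelement.comp_apply, htx, hx]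
      exact { exact := hexact, mono_f := hmono, epi_g := hepi }
    refine ⟨kernel gM, NX, kernel.ι gM, gM, kernel.condition gM,
      myShortExact_of_epi gM, ?_, hNX⟩
    exact SClosure.of_extension u v wuv hseT hTX (SClosure.of_iso Z ⟨(asIso (φ ≫ q)).symm⟩)


theorem statement7 (hlen : ∀ X : C, FinLength X) (S : C) [Simple S] :
    (∀ T N : C, SClosure S T → (∀ φ : S ⟶ N, φ = 0) → ∀ ψ : T ⟶ N, ψ = 0) ∧
    (∀ M : C, ∃ (T N : C) (f : T ⟶ M) (g : M ⟶ N) (w : f ≫ g = 0),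
      (ShortComplex.mk f g w).ShortExact ∧ SClosure S T ∧ (∀ φ : S ⟶ N, φ = 0)) := by
  constructor
  · intro T N hT hN
    induction hT with
    | of_isZero X hX => intro ψ; exact hX.eq_of_src ψ 0
    | of_iso X hX =>
      intro ψ
      obtain ⟨e⟩ := hX
      have : ψ = e.hom ≫ (e.inv ≫ ψ) := by simp
      rw [this, hN (e.inv ≫ ψ), comp_zero]
    | of_extension f g w hse hX hZ ihX ihZ =>
      intro ψ
      have hfψ : f ≫ ψ = 0 := ihX (f ≫ ψ)
      obtain ⟨d, hd⟩ := CokernelCofork.IsColimit.desc' hse.gIsCokernel ψ hfψ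
      have hd' : g ≫ d = ψ := hd
      rw [← hd', ihZ d, comp_zero]
  · intro M
    induction hlen M with
    | of_isZero X hX =>
      refine ⟨X, X, 𝟙 X, 0, comp_zero, ?_, SClosure.of_isZero X hX, fun φ => hX.eq_of_tgt φ 0⟩
      have hepi : Epi (0 : X ⟶ X) := by
        rw [show (0 : X ⟶ X) = 𝟙 X from hX.eq_of_src _ _]
        infer_instance
      exact { exact := ShortComplex.exact_of_isZero_X₂ _ hX, mono_f := by dsimp; infer_instance,
              epi_g := hepi }
    | of_extension i p wip hse hX hZsimple ih =>
      obtain ⟨TX, NX, fX, gX, wX, hseX, hTX, hNX⟩ := ih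
      exact step S i p wip hse hZsimple fX gX wX hseX hTX hNX
end
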